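/- arXiv:2103.01131 — 8 statements merged into one kernel-verified Lean document; each statement's English description precedes it below -/
import Mathlib

section
/- For every integer N ≥ 3, all real β > 0, δ ∈ ℝ and θ > 0, the expected total cost of providing incentives satisfies (N²θ/2)·(H_N + 1/(N−1)) ≤ E(θ) ≤ N(N−1)·θ·(H_N + 1), where E denotes either E_r or E_p. -/
open Real Finset Filter Topology Matrix

/-- Transition matrix `U` between the transient states of the absorbing Markov chain,
for population size `N`, selection intensity `β`, payoff difference `δ` and incentive `θ`.
The index `i : Fin (N-1)` corresponds to the state with `i+1` cooperators;
`x = β(θ+δ)` and `p_i = i(N-i)/N²`. -/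
noncomputable def Umat (N : ℕ) (β δ θ : ℝ) : Matrix (Fin (N - 1)) (Fin (N - 1)) ℝ :=
  fun i j =>
    let x : ℝ := β * (θ + δ)
    let p : ℝ := ((i : ℕ) + 1 : ℝ) * ((N : ℝ) - ((i : ℕ) + 1 : ℝ)) / (N : ℝ) ^ 2
    if (j : ℕ) = (i : ℕ) + 1 then p / (1 + Real.exp (-x))
    else if (j : ℕ) + 1 = (i : ℕ) then p / (1 + Real.exp x)
    else if j = i then 1 - p / (1 + Real.exp (-x)) - p / (1 + Real.exp x)
    else 0

/-- The fundamental matrix `𝒩 = (I - U)⁻¹` of the absorbing Markov chain. -/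
noncomputable def fund (N : ℕ) (β δ θ : ℝ) : Matrix (Fin (N - 1)) (Fin (N - 1)) ℝ :=
  (1 - Umat N β δ θ)⁻¹

/-- Expected total cost of institutional reward,
`E_r(θ) = (θ/2) Σ_{i=1}^{N-1} (n_{1,i} + n_{N-1,i}) · i`
(row `1` is index `0` and row `N-1` is index `N-2`; junk value `0` for `N < 3`). -/
noncomputable def Ereward (N : ℕ) (β δ θ : ℝ) : ℝ :=
  if h : 3 ≤ N then
    (θ / 2) * ∑ j : Fin (N - 1),
      (fund N β δ θ ⟨0, by omega⟩ j + fund N β δ θ ⟨N - 2, by omega⟩ j) * ((j : ℕ) + 1 : ℝ)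
  else 0

/-- Expected total cost of institutional punishment,
`E_p(θ) = (θ/2) Σ_{i=1}^{N-1} (n_{1,i} + n_{N-1,i}) · (N - i)`. -/
noncomputable def Epunish (N : ℕ) (β δ θ : ℝ) : ℝ :=
  if h : 3 ≤ N then
    (θ / 2) * ∑ j : Fin (N - 1),
      (fund N β δ θ ⟨0, by omega⟩ j + fund N β δ θ ⟨N - 2, by omega⟩ j)
        * ((N : ℝ) - ((j : ℕ) + 1 : ℝ))
  else 0

/-- Harmonic number `H_N = Σ_{j=1}^{N-1} 1/j`. -/
noncomputable def harmonicNum (N : ℕ) : ℝ := ∑ j ∈ Finset.range (N - 1), (1 : ℝ) / ((j : ℕ) + 1)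

namespace FPEaux

noncomputable def S (a : ℝ) (k : ℕ) : ℝ := ∑ i ∈ Finset.range k, a ^ i

lemma S_zero (a : ℝ) : S a 0 = 0 := by simp [S]

lemma S_succ (a : ℝ) (k : ℕ) : S a (k+1) = S a k + a ^ k := Finset.sum_range_succ _ _

lemma S_one (a : ℝ) : S a 1 = 1 := by simp [S]

lemma aS (a : ℝ) (k : ℕ) : a * S a k = S a (k+1) - 1 := by
  induction k with
  | zero => simp [S]
  | succ n ih =>
    rw [S_succ, S_succ, mul_add, ih]
    ring

lemma S_add (a : ℝ) (m n : ℕ) : S a (m + n) = S a m + a ^ m * S a n := by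
  induction n with
  | zero => simp [S]
  | succ n ih =>
    rw [← Nat.add_assoc, S_succ, ih, S_succ]
    ring

lemma S_nonneg (a : ℝ) (ha : 0 < a) (k : ℕ) : 0 ≤ S a k :=
  Finset.sum_nonneg fun i _ => le_of_lt (pow_pos ha i)

lemma one_le_S (a : ℝ) (ha : 0 < a) {k : ℕ} (hk : 1 ≤ k) : 1 ≤ S a k := by
  calc (1:ℝ) = S a 1 := (S_one a).symm
  _ ≤ S a k := by
      unfold S
      exact Finset.sum_le_sum_of_subset_of_nonneg
        (Finset.range_subset_range.2 hk) (fun i _ _ => le_of_lt (pow_pos ha i))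

lemma S_pos (a : ℝ) (ha : 0 < a) {k : ℕ} (hk : 1 ≤ k) : 0 < S a k :=
  lt_of_lt_of_le one_pos (one_le_S a ha hk)

noncomputable def mu (a : ℝ) (N I J : ℕ) : ℝ :=
  if I ≤ J then S a I * S a (N - J) else S a J * a ^ (I - J) * S a (N - I)

lemma bracket (a : ℝ) (N I J : ℕ) (hI : 1 ≤ I) (hI' : I ≤ N - 1)
    (hJ : 1 ≤ J) (hJ' : J ≤ N - 1) (hN : 3 ≤ N) :
    (1 + a) * mu a N I J - mu a N (I+1) J - a * mu a N (I-1) J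
      = if I = J then S a N else 0 := by
  rcases lt_trichotomy I J with h | h | h
  · rw [if_neg (by omega)]
    have e1 : mu a N I J = S a I * S a (N - J) := by rw [mu, if_pos (by omega)]
    have e2 : mu a N (I+1) J = S a (I+1) * S a (N - J) := by rw [mu, if_pos (by omega)]
    have e3 : mu a N (I-1) J = S a (I-1) * S a (N - J) := by rw [mu, if_pos (by omega)]
    rw [e1, e2, e3]
    have h1 : a * S a I = S a I + a ^ I - 1 := by
      have := aS a I; rw [S_succ] at this; linarith
    have h2 : a * S a (I-1) = S a I - 1 := by
      have := aS a (I-1); rwa [show I - 1 + 1 = I by omega] at this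
    rw [S_succ]
    linear_combination S a (N - J) * h1 - S a (N - J) * h2
  · subst h
    rw [if_pos rfl]
    rw [mu, if_pos le_rfl, mu, if_neg (by omega), mu, if_pos (by omega)]
    have h2 : a * S a (I-1) = S a I - 1 := by
      have := aS a (I-1); rwa [show I - 1 + 1 = I by omega] at this
    have h3 : a * S a (N - (I+1)) = S a (N - I) - 1 := by
      have := aS a (N - I - 1)
      rwa [show N - I - 1 + 1 = N - I by omega, show N - I - 1 = N - (I+1) by omega] at this
    have h4 : S a N = S a (N - I) + a ^ (N - I) * S a I := by
      have := S_add a (N - I) I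
      rwa [show N - I + I = N by omega] at this
    have h5 : a * S a (N - I) = S a (N - I) + a ^ (N - I) - 1 := by
      have := aS a (N - I)
      rw [S_succ] at this; linarith
    have he : I + 1 - I = 1 := by omega
    rw [he, pow_one]
    linear_combination (- S a (N - I)) * h2 - S a I * h3 + S a I * h5 - h4
  · rw [if_neg (by omega)]
    rw [mu, if_neg (by omega), mu, if_neg (by omega)]
    have hmu : mu a N (I-1) J = S a J * a ^ (I-1-J) * S a (N - (I-1)) := by
      rcases eq_or_lt_of_le (show J ≤ I - 1 by omega) with he | hlt
      · rw [mu, if_pos (by omega), ← he, Nat.sub_self, pow_zero]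
        ring
      · rw [mu, if_neg (by omega)]
    rw [hmu]
    set K := N - I with hK
    have hK1 : 1 ≤ K := by omega
    have e1 : I + 1 - J = (I - 1 - J) + 2 := by omega
    have e2 : I - J = (I - 1 - J) + 1 := by omega
    have e3 : N - (I + 1) = K - 1 := by omega
    have e4 : N - (I - 1) = K + 1 := by omega
    rw [e1, e2, e3, e4, pow_succ, pow_succ, pow_succ]
    have h2 : a * S a (K-1) = S a K - 1 := by
      have := aS a (K-1); rwa [show K - 1 + 1 = K by omega] at this
    have h3 : a * S a K = S a K + a ^ K - 1 := by
      have := aS a K; rw [S_succ] at this; linarith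
    have h4 : S a (K+1) = S a K + a ^ K := S_succ a K
    linear_combination (S a J * a ^ (I-1-J) * a) * h3 - (S a J * a ^ (I-1-J) * a) * h2
      - (S a J * a ^ (I-1-J) * a) * h4


noncomputable def mfun (a : ℝ) (N I J : ℕ) : ℝ :=
  (N:ℝ)^2 * (1+a) * mu a N I J / (S a N * (J:ℝ) * ((N:ℝ) - (J:ℝ)))

lemma mu_left_zero (a : ℝ) (N J : ℕ) : mu a N 0 J = 0 := by
  rw [mu, if_pos (Nat.zero_le _), S_zero, zero_mul]

lemma mu_right_end (a : ℝ) (N J : ℕ) (hJ : J < N) : mu a N N J = 0 := by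
  rw [mu, if_neg (by omega), Nat.sub_self, S_zero, mul_zero]

lemma mfun_left_zero (a : ℝ) (N J : ℕ) : mfun a N 0 J = 0 := by
  rw [mfun, mu_left_zero, mul_zero, zero_div]

lemma mfun_right_end (a : ℝ) (N J : ℕ) (hJ : J < N) : mfun a N N J = 0 := by
  rw [mfun, mu_right_end a N J hJ, mul_zero, zero_div]

/-- The key scalar recurrence. -/
lemma key (a : ℝ) (ha : 0 < a) (N I J : ℕ) (hN : 3 ≤ N) (hI : 1 ≤ I) (hI' : I ≤ N - 1)
    (hJ : 1 ≤ J) (hJ' : J ≤ N - 1) :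
    let P : ℝ := (I:ℝ) * ((N:ℝ) - (I:ℝ)) / (N:ℝ)^2
    (P/(1+a) + P*a/(1+a)) * mfun a N I J - (P/(1+a)) * mfun a N (I+1) J
      - (P*a/(1+a)) * mfun a N (I-1) J = if I = J then 1 else 0 := by
  intro P
  have hb := bracket a N I J hI hI' hJ hJ' hN
  have hNpos : (0:ℝ) < (N:ℝ) := by positivity
  have hSN : S a N ≠ 0 := ne_of_gt (S_pos a ha (by omega))
  have hJ0 : (J:ℝ) ≠ 0 := by positivity
  have hNJ : (N:ℝ) - (J:ℝ) ≠ 0 := by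
    have : (J:ℝ) < (N:ℝ) := by exact_mod_cast (by omega : J < N)
    linarith
  have hI0 : (I:ℝ) ≠ 0 := by positivity
  have hNI : (N:ℝ) - (I:ℝ) ≠ 0 := by
    have : (I:ℝ) < (N:ℝ) := by exact_mod_cast (by omega : I < N)
    linarith
  have ha1 : (1:ℝ) + a ≠ 0 := by positivity
  have hN0 : (N:ℝ) ≠ 0 := ne_of_gt hNpos
  rcases eq_or_ne I J with h | h
  · subst h
    rw [if_pos rfl] at hb ⊢
    simp only [mfun, P]
    have e : mu a N (I+1) I = (1+a) * mu a N I I - a * mu a N (I-1) I - S a N := by linarith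
    rw [e]
    field_simp
    ring
  · rw [if_neg h] at hb ⊢
    simp only [mfun, P]
    have e : mu a N (I+1) J = (1+a) * mu a N I J - a * mu a N (I-1) J := by linarith
    rw [e]
    field_simp
    ring


noncomputable def Mmat (N : ℕ) (a : ℝ) : Matrix (Fin (N-1)) (Fin (N-1)) ℝ :=
  fun i j => mfun a N ((i:ℕ)+1) ((j:ℕ)+1)

lemma sum_ite_nat {n : ℕ} (t : ℕ) (g : Fin n → ℝ) :
    (∑ j : Fin n, if (j:ℕ) = t then g j else 0) = if h : t < n then g ⟨t, h⟩ else 0 := by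
  by_cases h : t < n
  · rw [dif_pos h, Finset.sum_eq_single (⟨t, h⟩ : Fin n)]
    · rw [if_pos rfl]
    · intro b _ hb
      rw [if_neg]
      intro hbt
      exact hb (Fin.ext hbt)
    · intro habs; exact absurd (Finset.mem_univ _) habs
  · rw [dif_neg h, Finset.sum_eq_zero]
    intro j _
    rw [if_neg]
    have := j.isLt
    omega

lemma sum_ite_nat' {n : ℕ} (t : ℕ) (g : Fin n → ℝ) :
    (∑ j : Fin n, if (j:ℕ) + 1 = t then g j else 0)
      = if h : t - 1 < n ∧ 1 ≤ t then g ⟨t-1, h.1⟩ else 0 := by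
  by_cases h : t - 1 < n ∧ 1 ≤ t
  · rw [dif_pos h, Finset.sum_eq_single (⟨t-1, h.1⟩ : Fin n)]
    · rw [if_pos (show (t-1) + 1 = t by omega)]
    · intro b _ hb
      rw [if_neg]
      intro hbt
      refine hb (Fin.ext ?_)
      show (b:ℕ) = t - 1
      omega
    · intro habs; exact absurd (Finset.mem_univ _) habs
  · rw [dif_neg h, Finset.sum_eq_zero]
    intro j _
    rw [if_neg]
    have := j.isLt
    omega

lemma mul_eq_one (N : ℕ) (hN : 3 ≤ N) (β δ θ : ℝ) :
    (1 - Umat N β δ θ) * Mmat N (Real.exp (-(β * (θ + δ)))) = 1 := by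
  set a := Real.exp (-(β * (θ + δ))) with ha_def
  have ha : 0 < a := Real.exp_pos _
  have ha1 : (0:ℝ) < 1 + a := by positivity
  have hexp : Real.exp (β * (θ + δ)) = a⁻¹ := by
    rw [ha_def, ← Real.exp_neg, neg_neg]
  ext i k
  rw [Matrix.mul_apply, Matrix.one_apply]
  set P : ℝ := ((i:ℕ) + 1 : ℝ) * ((N:ℝ) - ((i:ℕ) + 1 : ℝ)) / (N:ℝ)^2 with hP
  have hU : ∀ j : Fin (N-1), (1 - Umat N β δ θ) i j
      = (if (j:ℕ) = (i:ℕ)+1 then -(P/(1+a)) else 0)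
        + (if (j:ℕ) + 1 = (i:ℕ) then -(P*a/(1+a)) else 0)
        + (if (j:ℕ) = (i:ℕ) then P/(1+a) + P*a/(1+a) else 0) := by
    intro j
    rw [Matrix.sub_apply, Matrix.one_apply, Umat]
    rw [← hP, hexp, ← ha_def]
    simp only [Fin.ext_iff]
    have hP' : 0 < 1 + a⁻¹ := by positivity
    have hN0 : ((N:ℝ)) ≠ 0 := by positivity
    have ha0 : a ≠ 0 := ne_of_gt ha
    have ha1' : (1:ℝ) + a ≠ 0 := ne_of_gt ha1
    have ha1'' : (1:ℝ) + a⁻¹ ≠ 0 := by positivity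
    split_ifs <;> first
      | (exfalso; omega)
      | ring1
      | (field_simp; first | ring1 | (left; ring1))
  calc ∑ j : Fin (N-1), (1 - Umat N β δ θ) i j * Mmat N a j k
      = ∑ j : Fin (N-1),
          ((if (j:ℕ) = (i:ℕ)+1 then -(P/(1+a)) * Mmat N a j k else 0)
          + (if (j:ℕ) + 1 = (i:ℕ) then -(P*a/(1+a)) * Mmat N a j k else 0)
          + (if (j:ℕ) = (i:ℕ) then (P/(1+a) + P*a/(1+a)) * Mmat N a j k else 0)) := by
        apply Finset.sum_congr rfl
        intro j _
        rw [hU j, add_mul, add_mul, ite_mul, ite_mul, ite_mul, zero_mul]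
    _ = (if h : (i:ℕ)+1 < N-1 then -(P/(1+a)) * Mmat N a ⟨(i:ℕ)+1, h⟩ k else 0)
        + (if h : (i:ℕ) - 1 < N-1 ∧ 1 ≤ (i:ℕ) then -(P*a/(1+a)) * Mmat N a ⟨(i:ℕ)-1, h.1⟩ k else 0)
        + (if h : (i:ℕ) < N-1 then (P/(1+a) + P*a/(1+a)) * Mmat N a ⟨(i:ℕ), h⟩ k else 0) := by
        rw [Finset.sum_add_distrib, Finset.sum_add_distrib, sum_ite_nat, sum_ite_nat', sum_ite_nat]
    _ = (P/(1+a) + P*a/(1+a)) * mfun a N ((i:ℕ)+1) ((k:ℕ)+1)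
        - (P/(1+a)) * mfun a N ((i:ℕ)+1+1) ((k:ℕ)+1)
        - (P*a/(1+a)) * mfun a N ((i:ℕ)+1-1) ((k:ℕ)+1) := by
        have hi := i.isLt
        have hk := k.isLt
        have e3 : (if h : (i:ℕ) < N-1 then (P/(1+a) + P*a/(1+a)) * Mmat N a ⟨(i:ℕ), h⟩ k else 0)
            = (P/(1+a) + P*a/(1+a)) * mfun a N ((i:ℕ)+1) ((k:ℕ)+1) := by
          rw [dif_pos hi]; rfl
        have e1 : (if h : (i:ℕ)+1 < N-1 then -(P/(1+a)) * Mmat N a ⟨(i:ℕ)+1, h⟩ k else 0)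
            = -((P/(1+a)) * mfun a N ((i:ℕ)+1+1) ((k:ℕ)+1)) := by
          by_cases h : (i:ℕ)+1 < N-1
          · rw [dif_pos h]
            show -(P/(1+a)) * mfun a N ((i:ℕ)+1+1) ((k:ℕ)+1) = _
            ring
          · rw [dif_neg h]
            rw [show (i:ℕ)+1+1 = N by omega, mfun_right_end a N ((k:ℕ)+1) (by omega)]
            ring
        have e2 : (if h : (i:ℕ) - 1 < N-1 ∧ 1 ≤ (i:ℕ) then -(P*a/(1+a)) * Mmat N a ⟨(i:ℕ)-1, h.1⟩ k else 0)
            = -((P*a/(1+a)) * mfun a N ((i:ℕ)+1-1) ((k:ℕ)+1)) := by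
          by_cases h : (i:ℕ) - 1 < N-1 ∧ 1 ≤ (i:ℕ)
          · rw [dif_pos h]
            show -(P*a/(1+a)) * mfun a N ((i:ℕ)-1+1) ((k:ℕ)+1) = _
            rw [show (i:ℕ)-1+1 = (i:ℕ)+1-1 by omega]
            ring
          · rw [dif_neg h]
            rw [show (i:ℕ)+1-1 = (i:ℕ) by omega, show (i:ℕ) = 0 by omega, mfun_left_zero]
            ring
        rw [e1, e2, e3]
        ring
    _ = if i = k then 1 else 0 := by
        have hkey := key a ha N ((i:ℕ)+1) ((k:ℕ)+1) hN (by omega)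
          (by have := i.isLt; omega) (by omega) (by have := k.isLt; omega)
        simp only at hkey
        rw [show ((((i:ℕ)+1 : ℕ)) : ℝ) = ((i:ℕ) : ℝ) + 1 by push_cast; ring] at hkey
        rw [← hP] at hkey
        rw [hkey]
        by_cases h : i = k
        · rw [if_pos (show (i:ℕ)+1 = (k:ℕ)+1 by rw [h]), if_pos h]
        · rw [if_neg (show ¬((i:ℕ)+1 = (k:ℕ)+1) from fun hh => h (Fin.ext (by omega))), if_neg h]


lemma fund_eq (N : ℕ) (hN : 3 ≤ N) (β δ θ : ℝ) :
    fund N β δ θ = Mmat N (Real.exp (-(β * (θ + δ)))) :=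
  Matrix.inv_eq_right_inv (mul_eq_one N hN β δ θ)

lemma mu_row_sum (a : ℝ) (N J : ℕ) (hN : 3 ≤ N) (hJ : 1 ≤ J) (hJ' : J ≤ N - 1) :
    mu a N 1 J + mu a N (N-1) J = S a (N-1) + a ^ (N-1-J) := by
  rcases eq_or_lt_of_le hJ' with he | hlt
  · subst he
    rw [mu, if_pos (by omega), mu, if_pos (by omega),
      show N - (N-1) = 1 by omega, S_one, Nat.sub_self, pow_zero]
    ring
  · rw [mu, if_pos (by omega), mu, if_neg (by omega), show N - (N-1) = 1 by omega, S_one]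
    have e1 : S a (N - J) = S a (N-1-J) + a ^ (N-1-J) := by
      rw [show N - J = (N-1-J) + 1 by omega, S_succ]
    have e2 : S a (N-1) = S a (N-1-J) + a ^ (N-1-J) * S a J := by
      have := S_add a (N-1-J) J
      rwa [show N-1-J+J = N-1 by omega] at this
    rw [e1, e2]
    ring

lemma row_sum (a : ℝ) (N t : ℕ) (hN : 3 ≤ N) (ht : t < N - 1) :
    mfun a N 1 (t+1) + mfun a N (N-1) (t+1)
      = (N:ℝ)^2 * (1+a) * (S a (N-1) + a ^ (N-2-t))
          / (S a N * ((t:ℕ)+1 : ℝ) * ((N:ℝ) - ((t:ℕ)+1 : ℝ))) := by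
  have h := mu_row_sum a N (t+1) hN (by omega) (by omega)
  rw [show N - 1 - (t+1) = N-2-t by omega] at h
  rw [mfun, mfun, ← add_div, ← mul_add, h]
  push_cast
  ring

lemma two_S_le (a : ℝ) (ha : 0 < a) (N : ℕ) (hN : 1 ≤ N) :
    2 * S a N ≤ (N:ℝ) * (1 + a ^ (N-1)) := by
  have hrefl : ∑ i ∈ Finset.range N, a ^ (N - 1 - i) = S a N := by
    have := Finset.sum_range_reflect (fun i => a ^ i) N
    simpa [S] using this
  have : 2 * S a N = ∑ i ∈ Finset.range N, (a ^ i + a ^ (N-1-i)) := by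
    rw [Finset.sum_add_distrib, hrefl, S]; ring
  rw [this]
  calc ∑ i ∈ Finset.range N, (a ^ i + a ^ (N-1-i))
      ≤ ∑ i ∈ Finset.range N, ((1:ℝ) + a ^ (N-1)) := by
        apply Finset.sum_le_sum
        intro i hi
        rw [Finset.mem_range] at hi
        have hpow : a ^ i * a ^ (N-1-i) = a ^ (N-1) := by
          rw [← pow_add]; congr 1; omega
        rcases le_total a 1 with h | h
        · have h1 : a ^ i ≤ 1 := pow_le_one₀ ha.le h
          have h2 : a ^ (N-1-i) ≤ 1 := pow_le_one₀ ha.le h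
          nlinarith
        · have h1 : 1 ≤ a ^ i := one_le_pow₀ h
          have h2 : 1 ≤ a ^ (N-1-i) := one_le_pow₀ h
          nlinarith
    _ = (N:ℝ) * (1 + a ^ (N-1)) := by
        rw [Finset.sum_const, Finset.card_range, nsmul_eq_mul]

lemma ineqA (a : ℝ) (ha : 0 < a) (N : ℕ) (hN : 3 ≤ N) :
    S a N ≤ (1+a) * S a (N-1) := by
  have h1 : a * S a (N-1) = S a N - 1 := by
    have := aS a (N-1); rwa [show N - 1 + 1 = N by omega] at this
  have h2 : 1 ≤ S a (N-1) := one_le_S a ha (by omega)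
  nlinarith

lemma ineqB (a : ℝ) (ha : 0 < a) (N : ℕ) (hN : 3 ≤ N) :
    (N:ℝ) * ((1+a) * S a (N-1)) ≤ 2 * ((N:ℝ)-1) * S a N := by
  have h1 : a * S a (N-1) = S a N - 1 := by
    have := aS a (N-1); rwa [show N - 1 + 1 = N by omega] at this
  have h2 : S a N = S a (N-1) + a ^ (N-1) := by
    have := S_succ a (N-1); rwa [show N - 1 + 1 = N by omega] at this
  have h3 := two_S_le a ha N (by omega)
  have hN1 : (1:ℝ) ≤ (N:ℝ) := by exact_mod_cast Nat.one_le_iff_ne_zero.mpr (by omega)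
  calc (N:ℝ) * ((1+a) * S a (N-1))
      = 2*(N:ℝ)*S a N - (N:ℝ)*(1 + a ^ (N-1)) := by
        linear_combination (N:ℝ) * h1 - (N:ℝ) * h2
    _ ≤ 2*(N:ℝ)*S a N - 2*S a N := by linarith
    _ = 2 * ((N:ℝ)-1) * S a N := by ring

lemma harmonic_nonneg (N : ℕ) : 0 ≤ harmonicNum N :=
  Finset.sum_nonneg fun j _ => by positivity

/-- the generic bound on the weighted sum -/
lemma main_bound (N : ℕ) (hN : 3 ≤ N) (a : ℝ) (ha : 0 < a) (den : ℕ → ℝ)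
    (hden1 : ∀ t < N-1, 1 ≤ den t) (hden2 : ∀ t < N-1, den t ≤ (N:ℝ)-1)
    (hH : ∑ t ∈ Finset.range (N-1), 1 / den t = harmonicNum N) :
    (N:ℝ)^2 * (harmonicNum N + 1/((N:ℝ)-1))
      ≤ (N:ℝ)^2*(1+a)/S a N * ∑ t ∈ Finset.range (N-1), (S a (N-1) + a ^ (N-2-t)) / den t
    ∧ (N:ℝ)^2*(1+a)/S a N * ∑ t ∈ Finset.range (N-1), (S a (N-1) + a ^ (N-2-t)) / den t
      ≤ 2*(N:ℝ)*((N:ℝ)-1) * (harmonicNum N + 1) := by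
  have hSN : 0 < S a N := S_pos a ha (by omega)
  have hSN1 : 0 < S a (N-1) := S_pos a ha (by omega)
  have hN1 : (1:ℝ) ≤ (N:ℝ) - 1 - 1 := by
    have : (3:ℝ) ≤ (N:ℝ) := by exact_mod_cast hN
    linarith
  have hNR : (0:ℝ) < (N:ℝ) := by positivity
  have hG : ∑ t ∈ Finset.range (N-1), a ^ (N-2-t) = S a (N-1) := by
    have := Finset.sum_range_reflect (fun i => a ^ i) (N-1)
    simp only [S]
    rw [← this]
    apply Finset.sum_congr rfl
    intro t ht
    rw [Finset.mem_range] at ht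
    congr 1
    try omega
  have hsplit : ∑ t ∈ Finset.range (N-1), (S a (N-1) + a ^ (N-2-t)) / den t
      = S a (N-1) * harmonicNum N + ∑ t ∈ Finset.range (N-1), a ^ (N-2-t) / den t := by
    rw [← hH, Finset.mul_sum, ← Finset.sum_add_distrib]
    apply Finset.sum_congr rfl
    intro t ht
    rw [add_div]
    rw [mul_one_div]
  have hGlow : S a (N-1) / ((N:ℝ)-1) ≤ ∑ t ∈ Finset.range (N-1), a ^ (N-2-t) / den t := by
    rw [← hG, Finset.sum_div]
    apply Finset.sum_le_sum
    intro t ht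
    rw [Finset.mem_range] at ht
    apply div_le_div_of_nonneg_left (by positivity) _ (hden2 t ht)
    exact lt_of_lt_of_le one_pos (hden1 t ht)
  have hGhigh : ∑ t ∈ Finset.range (N-1), a ^ (N-2-t) / den t ≤ S a (N-1) := by
    rw [← hG]
    apply Finset.sum_le_sum
    intro t ht
    rw [Finset.mem_range] at ht
    exact div_le_self (by positivity) (hden1 t ht)
  set T := ∑ t ∈ Finset.range (N-1), (S a (N-1) + a ^ (N-2-t)) / den t with hT
  have hTlow : S a (N-1) * (harmonicNum N + 1/((N:ℝ)-1)) ≤ T := by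
    have expand : S a (N-1) * (harmonicNum N + 1/((N:ℝ)-1))
        = S a (N-1) * harmonicNum N + S a (N-1)/((N:ℝ)-1) := by ring
    rw [expand, hsplit]
    linarith [hGlow]
  have hThigh : T ≤ S a (N-1) * (harmonicNum N + 1) := by
    have expand : S a (N-1) * (harmonicNum N + 1)
        = S a (N-1) * harmonicNum N + S a (N-1) := by ring
    rw [expand, hsplit]
    linarith [hGhigh]
  have hA := ineqA a ha N hN
  have hB := ineqB a ha N hN
  have hNgt : (0:ℝ) < (N:ℝ) - 1 := by linarith
  have hh := harmonic_nonneg N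
  have hHpos : 0 ≤ harmonicNum N + 1/((N:ℝ)-1) := by
    have : (0:ℝ) ≤ 1/((N:ℝ)-1) := by positivity
    linarith
  have hH1pos : 0 ≤ harmonicNum N + 1 := by linarith
  have ha1 : (0:ℝ) < 1 + a := by positivity
  constructor
  · have key : S a N * (harmonicNum N + 1/((N:ℝ)-1)) ≤ (1+a) * T := by
      calc S a N * (harmonicNum N + 1/((N:ℝ)-1))
          ≤ (1+a) * S a (N-1) * (harmonicNum N + 1/((N:ℝ)-1)) :=
            mul_le_mul_of_nonneg_right hA hHpos
        _ ≤ (1+a) * T := by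
            rw [mul_assoc]
            exact mul_le_mul_of_nonneg_left hTlow (le_of_lt ha1)
    have h4 : (N:ℝ)^2*(1+a)/S a N * T = (N:ℝ)^2 * ((1+a)*T) / S a N := by ring
    rw [h4, le_div_iff₀ hSN]
    calc (N:ℝ)^2 * (harmonicNum N + 1/((N:ℝ)-1)) * S a N
        = (N:ℝ)^2 * (S a N * (harmonicNum N + 1/((N:ℝ)-1))) := by ring
      _ ≤ (N:ℝ)^2 * ((1+a)*T) := mul_le_mul_of_nonneg_left key (by positivity)
  · have h1 : (1+a) * T ≤ (1+a) * (S a (N-1) * (harmonicNum N + 1)) :=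
      mul_le_mul_of_nonneg_left hThigh (le_of_lt ha1)
    have h2 : (N:ℝ) * ((1+a) * S a (N-1)) * (harmonicNum N + 1)
        ≤ 2 * ((N:ℝ)-1) * S a N * (harmonicNum N + 1) :=
      mul_le_mul_of_nonneg_right hB hH1pos
    have key : (N:ℝ) * ((1+a) * T) ≤ 2*((N:ℝ)-1) * S a N * (harmonicNum N + 1) := by
      calc (N:ℝ) * ((1+a) * T)
          ≤ (N:ℝ) * ((1+a) * (S a (N-1) * (harmonicNum N + 1))) :=
            mul_le_mul_of_nonneg_left h1 (le_of_lt hNR)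
        _ = (N:ℝ) * ((1+a) * S a (N-1)) * (harmonicNum N + 1) := by ring
        _ ≤ 2 * ((N:ℝ)-1) * S a N * (harmonicNum N + 1) := h2
    have h3 : (N:ℝ)^2*(1+a)/S a N * T = (N:ℝ) * ((N:ℝ) * ((1+a)*T)) / S a N := by ring
    rw [h3, div_le_iff₀ hSN]
    calc (N:ℝ) * ((N:ℝ) * ((1+a)*T))
        ≤ (N:ℝ) * (2*((N:ℝ)-1) * S a N * (harmonicNum N + 1)) :=
          mul_le_mul_of_nonneg_left key (le_of_lt hNR)
      _ = 2*(N:ℝ)*((N:ℝ)-1) * (harmonicNum N + 1) * S a N := by ring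

lemma Ereward_eq (N : ℕ) (hN : 3 ≤ N) (β δ θ : ℝ) :
    Ereward N β δ θ = (θ/2) * ((N:ℝ)^2*(1+Real.exp (-(β * (θ + δ))))/S (Real.exp (-(β * (θ + δ)))) N
      * ∑ t ∈ Finset.range (N-1),
        (S (Real.exp (-(β * (θ + δ)))) (N-1) + (Real.exp (-(β * (θ + δ)))) ^ (N-2-t))
          / ((N:ℝ) - ((t:ℕ)+1 : ℝ))) := by
  set a := Real.exp (-(β * (θ + δ))) with ha_def
  have ha : 0 < a := Real.exp_pos _
  have hSN : (0:ℝ) < S a N := S_pos a ha (by omega)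
  rw [Ereward, dif_pos hN, fund_eq N hN β δ θ, ← ha_def]
  congr 1
  rw [Finset.mul_sum, ← Fin.sum_univ_eq_sum_range
    (fun t => (N:ℝ)^2*(1+a)/S a N * ((S a (N-1) + a ^ (N-2-t)) / ((N:ℝ) - ((t:ℕ)+1 : ℝ)))) (N-1)]
  apply Finset.sum_congr rfl
  intro j _
  have h0 : Mmat N a ⟨0, by omega⟩ j = mfun a N 1 ((j:ℕ)+1) := rfl
  have h1 : Mmat N a ⟨N-2, by omega⟩ j = mfun a N (N-1) ((j:ℕ)+1) := by
    show mfun a N (N-2+1) ((j:ℕ)+1) = _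
    rw [show N-2+1 = N-1 by omega]
  rw [h0, h1, row_sum a N (j:ℕ) hN j.isLt]
  have hj := j.isLt
  have ht2 : ((j:ℕ):ℝ) + 2 ≤ (N:ℝ) := by
    have : (j:ℕ) + 2 ≤ N := by omega
    exact_mod_cast this
  have hd1 : ((j:ℕ):ℝ) + 1 ≠ 0 := by positivity
  have hd2 : (N:ℝ) - (((j:ℕ):ℝ)+1) ≠ 0 := by
    intro h; rw [sub_eq_zero] at h; linarith
  field_simp

lemma Epunish_eq (N : ℕ) (hN : 3 ≤ N) (β δ θ : ℝ) :
    Epunish N β δ θ = (θ/2) * ((N:ℝ)^2*(1+Real.exp (-(β * (θ + δ))))/S (Real.exp (-(β * (θ + δ)))) N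
      * ∑ t ∈ Finset.range (N-1),
        (S (Real.exp (-(β * (θ + δ)))) (N-1) + (Real.exp (-(β * (θ + δ)))) ^ (N-2-t))
          / (((t:ℕ)+1 : ℝ))) := by
  set a := Real.exp (-(β * (θ + δ))) with ha_def
  have ha : 0 < a := Real.exp_pos _
  have hSN : (0:ℝ) < S a N := S_pos a ha (by omega)
  rw [Epunish, dif_pos hN, fund_eq N hN β δ θ, ← ha_def]
  congr 1
  rw [Finset.mul_sum, ← Fin.sum_univ_eq_sum_range
    (fun t => (N:ℝ)^2*(1+a)/S a N * ((S a (N-1) + a ^ (N-2-t)) / (((t:ℕ)+1 : ℝ)))) (N-1)]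
  apply Finset.sum_congr rfl
  intro j _
  have h0 : Mmat N a ⟨0, by omega⟩ j = mfun a N 1 ((j:ℕ)+1) := rfl
  have h1 : Mmat N a ⟨N-2, by omega⟩ j = mfun a N (N-1) ((j:ℕ)+1) := by
    show mfun a N (N-2+1) ((j:ℕ)+1) = _
    rw [show N-2+1 = N-1 by omega]
  rw [h0, h1, row_sum a N (j:ℕ) hN j.isLt]
  have hj := j.isLt
  have ht2 : ((j:ℕ):ℝ) + 2 ≤ (N:ℝ) := by
    have : (j:ℕ) + 2 ≤ N := by omega
    exact_mod_cast this
  have hd1 : ((j:ℕ):ℝ) + 1 ≠ 0 := by positivity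
  have hd2 : (N:ℝ) - (((j:ℕ):ℝ)+1) ≠ 0 := by
    intro h; rw [sub_eq_zero] at h; linarith
  field_simp

end FPEaux

open FPEaux

/-- For every integer N ≥ 3, all real β > 0, δ ∈ ℝ and θ > 0,
(N²θ/2)·(H_N + 1/(N−1)) ≤ E(θ) ≤ N(N−1)·θ·(H_N + 1), where E is either E_r or E_p. -/
theorem finite_population_estimates (N : ℕ) (hN : 3 ≤ N) (β δ θ : ℝ) (hβ : 0 < β)
    (hθ : 0 < θ) :
    ((N : ℝ) ^ 2 * θ / 2) * (harmonicNum N + 1 / ((N : ℝ) - 1)) ≤ Ereward N β δ θ ∧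
    Ereward N β δ θ ≤ (N : ℝ) * ((N : ℝ) - 1) * θ * (harmonicNum N + 1) ∧
    ((N : ℝ) ^ 2 * θ / 2) * (harmonicNum N + 1 / ((N : ℝ) - 1)) ≤ Epunish N β δ θ ∧
    Epunish N β δ θ ≤ (N : ℝ) * ((N : ℝ) - 1) * θ * (harmonicNum N + 1) := by
  set a := Real.exp (-(β * (θ + δ))) with ha_def
  have ha : 0 < a := Real.exp_pos _
  have hNR : (3:ℝ) ≤ (N:ℝ) := by exact_mod_cast hN
  -- reward denominators
  have hden1r : ∀ t < N-1, (1:ℝ) ≤ (N:ℝ) - ((t:ℕ)+1 : ℝ) := by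
    intro t ht
    have h2 : ((t:ℕ):ℝ) + 2 ≤ (N:ℝ) := by exact_mod_cast (by omega : t + 2 ≤ N)
    linarith
  have hden2r : ∀ t < N-1, (N:ℝ) - ((t:ℕ)+1 : ℝ) ≤ (N:ℝ)-1 := by
    intro t ht
    have : (0:ℝ) ≤ ((t:ℕ):ℝ) := by positivity
    linarith
  have hHr : ∑ t ∈ Finset.range (N-1), 1 / ((N:ℝ) - ((t:ℕ)+1 : ℝ)) = harmonicNum N := by
    rw [harmonicNum, ← Finset.sum_range_reflect (fun t => (1:ℝ)/((t:ℕ)+1)) (N-1)]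
    apply Finset.sum_congr rfl
    intro t ht
    rw [Finset.mem_range] at ht
    congr 1
    rw [show N-1-1-t = N - (t+2) by omega, Nat.cast_sub (by omega : t+2 ≤ N)]
    push_cast
    ring
  have hden1p : ∀ t < N-1, (1:ℝ) ≤ ((t:ℕ)+1 : ℝ) := by
    intro t ht
    have : (0:ℝ) ≤ ((t:ℕ):ℝ) := by positivity
    linarith
  have hden2p : ∀ t < N-1, ((t:ℕ)+1 : ℝ) ≤ (N:ℝ)-1 := by
    intro t ht
    have h2 : ((t:ℕ):ℝ) + 2 ≤ (N:ℝ) := by exact_mod_cast (by omega : t + 2 ≤ N)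
    linarith
  have hHp : ∑ t ∈ Finset.range (N-1), 1 / (((t:ℕ)+1 : ℝ)) = harmonicNum N := rfl
  obtain ⟨l1, u1⟩ := main_bound N hN a ha (fun t => (N:ℝ) - ((t:ℕ)+1 : ℝ)) hden1r hden2r hHr
  obtain ⟨l2, u2⟩ := main_bound N hN a ha (fun t => ((t:ℕ)+1 : ℝ)) hden1p hden2p hHp
  have hEr := Ereward_eq N hN β δ θ
  have hEp := Epunish_eq N hN β δ θ
  rw [← ha_def] at hEr hEp
  have hθ2 : (0:ℝ) ≤ θ/2 := by positivity
  refine ⟨?_, ?_, ?_, ?_⟩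
  · rw [hEr]
    calc ((N:ℝ)^2*θ/2) * (harmonicNum N + 1/((N:ℝ)-1))
        = (θ/2) * ((N:ℝ)^2 * (harmonicNum N + 1/((N:ℝ)-1))) := by ring
      _ ≤ _ := mul_le_mul_of_nonneg_left l1 hθ2
  · rw [hEr]
    calc (θ/2) * _ ≤ (θ/2) * (2*(N:ℝ)*((N:ℝ)-1) * (harmonicNum N + 1)) :=
          mul_le_mul_of_nonneg_left u1 hθ2
      _ = (N:ℝ)*((N:ℝ)-1)*θ*(harmonicNum N + 1) := by ring
  · rw [hEp]
    calc ((N:ℝ)^2*θ/2) * (harmonicNum N + 1/((N:ℝ)-1))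
        = (θ/2) * ((N:ℝ)^2 * (harmonicNum N + 1/((N:ℝ)-1))) := by ring
      _ ≤ _ := mul_le_mul_of_nonneg_left l2 hθ2
  · rw [hEp]
    calc (θ/2) * _ ≤ (θ/2) * (2*(N:ℝ)*((N:ℝ)-1) * (harmonicNum N + 1)) :=
          mul_le_mul_of_nonneg_left u2 hθ2
      _ = (N:ℝ)*((N:ℝ)-1)*θ*(harmonicNum N + 1) := by ring
end

section
/- Fix reals b > c > 0, β > 0 and θ > 0. For each integer N ≥ 3, let E_N(θ) denote either the reward cost E_r(θ) or the punishment cost E_p(θ) computed for population size N with δ = −(c + b/(N−1)) (the Donation Game). Then lim_{N→∞} E_N(θ) / ((N²θ/2)·(log N + γ)) = 1 + e^{−β|θ−c|}, where γ is the Euler–Mascheroni constant. -/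
open Real Finset Filter Topology Matrix

/-! ### Auxiliary development -/

noncomputable def gfun (r : ℝ) (N k j : ℕ) : ℝ := (1 - r ^ min k j) * (r ^ max k j - r ^ N)

noncomputable def Cfun (r : ℝ) (N j : ℕ) : ℝ :=
  (1 + r) * (N : ℝ) ^ 2 / ((1 - r) * (1 - r ^ N) * r ^ j * ((j : ℝ) * ((N : ℝ) - (j : ℝ))))

noncomputable def Mfun (r : ℝ) (N k j : ℕ) : ℝ := gfun r N k j * Cfun r N j

noncomputable def MmatD (N : ℕ) (r : ℝ) : Matrix (Fin (N - 1)) (Fin (N - 1)) ℝ :=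
  Matrix.of fun i j => Mfun r N ((i : ℕ) + 1) ((j : ℕ) + 1)

@[simp] lemma MmatD_apply (N : ℕ) (r : ℝ) (i j : Fin (N - 1)) :
    MmatD N r i j = Mfun r N ((i : ℕ) + 1) ((j : ℕ) + 1) := rfl

noncomputable def LL (r : ℝ) (N : ℕ) : ℝ := (1 + r) * (1 - r ^ (N - 1)) / (1 - r ^ N)

noncomputable def TTr (r : ℝ) (N : ℕ) : ℝ :=
  ∑ j ∈ Finset.range (N - 1), (r ^ (N - 2 - j) * (1 - r) / (1 - r ^ N)) * (1 / ((N : ℝ) - 1 - (j : ℕ)))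

noncomputable def TTp (r : ℝ) (N : ℕ) : ℝ :=
  ∑ j ∈ Finset.range (N - 1), (r ^ (N - 2 - j) * (1 - r) / (1 - r ^ N)) * (1 / ((j : ℝ) + 1))

noncomputable def rfDG (b c β θ : ℝ) (N : ℕ) : ℝ :=
  Real.exp (-(β * (θ + -(c + b / ((N : ℝ) - 1)))))

lemma pow_ne_one_of_ne_one {r : ℝ} (hr0 : 0 < r) (hr1 : r ≠ 1) {n : ℕ} (hn : n ≠ 0) :
    r ^ n ≠ 1 := by
  rcases hr1.lt_or_gt with h | h
  · exact ne_of_lt (pow_lt_one₀ hr0.le h hn)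
  · exact ne_of_gt (one_lt_pow₀ h hn)

lemma gfun_bracket {r : ℝ} (hr0 : 0 < r) (hr1 : r ≠ 1) {N k j : ℕ}
    (hk1 : 1 ≤ k) (hkN : k ≤ N - 1) (hj1 : 1 ≤ j) (hjN : j ≤ N - 1) (hN : 3 ≤ N) :
    gfun r N k j - (1 / (1 + r)) * gfun r N (k + 1) j - (r / (1 + r)) * gfun r N (k - 1) j
      = if k = j then r ^ j * (1 - r) * (1 - r ^ N) / (1 + r) else 0 := by
  have h1r : (0:ℝ) < 1 + r := by linarith
  obtain ⟨m, rfl⟩ : ∃ m, k = m + 1 := ⟨k - 1, by omega⟩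
  rcases lt_trichotomy (m + 1) j with hlt | heq | hgt
  · rw [if_neg (by omega)]
    unfold gfun
    rw [min_eq_left (by omega), max_eq_right (by omega),
        min_eq_left (by omega), max_eq_right (by omega),
        min_eq_left (by omega), max_eq_right (by omega)]
    simp only [Nat.add_sub_cancel]
    field_simp
    ring
  · rw [if_pos heq]
    subst heq
    unfold gfun
    rw [min_self, max_self,
        min_eq_right (by omega), max_eq_left (by omega),
        min_eq_left (by omega), max_eq_right (by omega)]
    simp only [Nat.add_sub_cancel]
    field_simp
    ring
  · rw [if_neg (by omega)]
    unfold gfun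
    rw [min_eq_right (by omega), max_eq_left (by omega),
        min_eq_right (by omega), max_eq_left (by omega),
        min_eq_right (by omega), max_eq_left (by omega)]
    simp only [Nat.add_sub_cancel]
    obtain ⟨s, rfl⟩ : ∃ s, m = j + s := ⟨m - j, by omega⟩
    field_simp
    ring

lemma key_identity {r : ℝ} (hr0 : 0 < r) (hr1 : r ≠ 1) {N k j : ℕ} (hN : 3 ≤ N)
    (hk1 : 1 ≤ k) (hkN : k ≤ N - 1) (hj1 : 1 ≤ j) (hjN : j ≤ N - 1) :
    ((k : ℝ) * ((N : ℝ) - (k : ℝ)) / (N : ℝ) ^ 2) *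
      (Mfun r N k j - (1 / (1 + r)) * Mfun r N (k + 1) j
        - (r / (1 + r)) * Mfun r N (k - 1) j) = if k = j then 1 else 0 := by
  have hfac : Mfun r N k j - (1 / (1 + r)) * Mfun r N (k + 1) j
      - (r / (1 + r)) * Mfun r N (k - 1) j
      = (gfun r N k j - (1 / (1 + r)) * gfun r N (k + 1) j
          - (r / (1 + r)) * gfun r N (k - 1) j) * Cfun r N j := by
    unfold Mfun; ring
  rw [hfac, gfun_bracket hr0 hr1 hk1 hkN hj1 hjN hN]
  by_cases hkj : k = j
  · rw [if_pos hkj, if_pos hkj]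
    subst hkj
    have hNR : (0:ℝ) < (N:ℝ) := by positivity
    have hkR : (0:ℝ) < (k:ℝ) := by exact_mod_cast hk1
    have hNk : (k:ℝ) < (N:ℝ) := by exact_mod_cast (by omega : k < N)
    have h1r : (0:ℝ) < 1 + r := by linarith
    have h1r' : (1:ℝ) - r ≠ 0 := sub_ne_zero.mpr (Ne.symm hr1)
    have hrN : (1:ℝ) - r ^ N ≠ 0 :=
      sub_ne_zero.mpr (Ne.symm (pow_ne_one_of_ne_one hr0 hr1 (by omega)))
    have hrj : r ^ k ≠ 0 := by positivity
    have hY : ((N:ℝ)^2 * (1+r) * ((1-r) * (1-r^N) * r^k * ((k:ℝ) * ((N:ℝ)-(k:ℝ))))) ≠ 0 := by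
      apply mul_ne_zero
      apply mul_ne_zero (by positivity) (by positivity)
      apply mul_ne_zero
      apply mul_ne_zero (mul_ne_zero h1r' hrN) hrj
      exact mul_ne_zero hkR.ne' (by linarith)
    unfold Cfun
    rw [div_mul_div_comm, div_mul_div_comm, div_eq_one_iff_eq (by
      rw [← mul_assoc]; exact hY)]
    ring
  · rw [if_neg hkj, if_neg hkj, zero_mul, mul_zero]

lemma Mfun_zero (r : ℝ) (N j : ℕ) : Mfun r N 0 j = 0 := by
  unfold Mfun gfun; simp

lemma Mfun_top (r : ℝ) (N j : ℕ) (hj : j ≤ N) : Mfun r N N j = 0 := by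
  unfold Mfun gfun; rw [max_eq_left hj]; simp

lemma sum_ite_coe {n : ℕ} (f : Fin n → ℝ) (m : ℕ) :
    (∑ k : Fin n, if (k : ℕ) = m then f k else 0) = if h : m < n then f ⟨m, h⟩ else 0 := by
  split_ifs with h
  · rw [Finset.sum_eq_single ⟨m, h⟩]
    · simp
    · intro k _ hk
      exact if_neg (by simpa [Fin.ext_iff] using hk)
    · simp
  · exact Finset.sum_eq_zero fun k _ => if_neg fun hk => h (by rw [← hk]; exact k.isLt)

lemma sum_ite_coe' {n : ℕ} (f : Fin n → ℝ) (m : ℕ) :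
    (∑ k : Fin n, if (k : ℕ) + 1 = m then f k else 0)
      = if h : 1 ≤ m ∧ m - 1 < n then f ⟨m - 1, h.2⟩ else 0 := by
  split_ifs with h
  · rw [Finset.sum_eq_single ⟨m - 1, h.2⟩]
    · rw [if_pos (by simp only [Fin.val_mk]; omega)]
    · intro k _ hk
      refine if_neg fun hc => hk ?_
      rw [Fin.ext_iff]
      simp only
      omega
    · simp
  · refine Finset.sum_eq_zero fun k _ => if_neg fun hk => h ⟨by omega, by have := k.isLt; omega⟩


lemma fund_eq (N : ℕ) (hN : 3 ≤ N) (β δ θ : ℝ) (hx : β * (θ + δ) ≠ 0) :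
    fund N β δ θ = MmatD N (Real.exp (-(β * (θ + δ)))) := by
  have hr0 : (0:ℝ) < Real.exp (-(β * (θ + δ))) := Real.exp_pos _
  have hr1 : Real.exp (-(β * (θ + δ))) ≠ 1 := by
    rw [Ne, Real.exp_eq_one_iff]
    simpa using hx
  set r := Real.exp (-(β * (θ + δ))) with hrdef
  have h1r : (0:ℝ) < 1 + r := by linarith
  have hea : Real.exp (-(β * (θ + δ))) = r := rfl
  have heb : Real.exp (β * (θ + δ)) = r⁻¹ := by rw [hrdef, ← Real.exp_neg, neg_neg]
  have hda : ∀ p : ℝ, p / (1 + Real.exp (-(β * (θ + δ)))) = p * (1 / (1 + r)) := by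
    intro p; rw [hea]; ring
  have hdb : ∀ p : ℝ, p / (1 + Real.exp (β * (θ + δ))) = p * (r / (1 + r)) := by
    intro p; rw [heb]
    rw [div_eq_iff (by positivity)]
    field_simp
    ring
  unfold fund
  apply Matrix.inv_eq_right_inv
  ext i j
  have hiN : (i : ℕ) < N - 1 := i.isLt
  have hjN : (j : ℕ) < N - 1 := j.isLt
  rw [Matrix.sub_mul, Matrix.one_mul, Matrix.sub_apply, Matrix.mul_apply]
  set pi : ℝ := ((i : ℕ) + 1 : ℝ) * ((N : ℝ) - ((i : ℕ) + 1 : ℝ)) / (N : ℝ) ^ 2 with hpidef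
  have hU : ∀ k : Fin (N - 1), Umat N β δ θ i k * MmatD N r k j
      = ((if (k : ℕ) = (i : ℕ) + 1 then (pi * (1 / (1 + r))) * MmatD N r k j else 0)
        + (if (k : ℕ) + 1 = (i : ℕ) then (pi * (r / (1 + r))) * MmatD N r k j else 0))
        + (if k = i then (1 - pi * (1 / (1 + r)) - pi * (r / (1 + r))) * MmatD N r k j
            else 0) := by
    intro k
    show (if (k : ℕ) = (i : ℕ) + 1 then pi / (1 + Real.exp (-(β * (θ + δ))))
      else if (k : ℕ) + 1 = (i : ℕ) then pi / (1 + Real.exp (β * (θ + δ)))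
      else if k = i then 1 - pi / (1 + Real.exp (-(β * (θ + δ))))
          - pi / (1 + Real.exp (β * (θ + δ)))
      else 0) * MmatD N r k j = _
    by_cases h1 : (k : ℕ) = (i : ℕ) + 1
    · rw [if_pos h1, if_pos h1, if_neg (by omega), if_neg (by rw [Fin.ext_iff]; omega)]
      rw [hda]; ring
    · rw [if_neg h1, if_neg h1]
      by_cases h2 : (k : ℕ) + 1 = (i : ℕ)
      · rw [if_pos h2, if_pos h2, if_neg (by rw [Fin.ext_iff]; omega)]
        rw [hdb]; ring
      · rw [if_neg h2, if_neg h2]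
        by_cases h3 : k = i
        · rw [if_pos h3, if_pos h3, hda, hdb]; ring
        · rw [if_neg h3, if_neg h3]; ring
  rw [Finset.sum_congr rfl fun k _ => hU k]
  rw [Finset.sum_add_distrib, Finset.sum_add_distrib, sum_ite_coe, sum_ite_coe']
  have h3 : (∑ k : Fin (N - 1), if k = i
      then (1 - pi * (1 / (1 + r)) - pi * (r / (1 + r))) * MmatD N r k j else 0)
      = (1 - pi * (1 / (1 + r)) - pi * (r / (1 + r))) * MmatD N r i j :=
    (Finset.sum_ite_eq' Finset.univ i _).trans (if_pos (Finset.mem_univ i))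
  rw [h3]
  have hS1 : (if h : (i : ℕ) + 1 < N - 1
      then (pi * (1 / (1 + r))) * MmatD N r ⟨(i : ℕ) + 1, h⟩ j else 0)
      = (pi * (1 / (1 + r))) * Mfun r N ((i : ℕ) + 2) ((j : ℕ) + 1) := by
    split_ifs with h
    · simp only [MmatD_apply]
    · have hi2 : (i : ℕ) + 2 = N := by omega
      rw [hi2, Mfun_top r N _ (by omega)]
      ring
  have hS2 : (if h : 1 ≤ (i : ℕ) ∧ (i : ℕ) - 1 < N - 1
      then (pi * (r / (1 + r))) * MmatD N r ⟨(i : ℕ) - 1, h.2⟩ j else 0)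
      = (pi * (r / (1 + r))) * Mfun r N (i : ℕ) ((j : ℕ) + 1) := by
    split_ifs with h
    · simp only [MmatD_apply]
      congr 2
      omega
    · have hi0 : (i : ℕ) = 0 := by omega
      rw [hi0, Mfun_zero]
      ring
  rw [hS1, hS2]
  have hkey := key_identity hr0 hr1 hN (k := (i : ℕ) + 1) (j := (j : ℕ) + 1)
    (by omega) (by omega) (by omega) (by omega)
  simp only [Nat.add_sub_cancel] at hkey
  have hif : (if (i : ℕ) + 1 = (j : ℕ) + 1 then (1:ℝ) else 0) = (1 : Matrix (Fin (N-1)) (Fin (N-1)) ℝ) i j := by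
    simp [Matrix.one_apply, Fin.ext_iff]
  rw [hif] at hkey
  have hab : (1:ℝ) / (1 + r) + r / (1 + r) = 1 := by field_simp
  simp only [show (i:ℕ) + 1 + 1 = (i:ℕ) + 2 from rfl] at hkey
  simp only [MmatD_apply, hpidef]
  push_cast at hkey ⊢
  linear_combination hkey + (((((i:ℕ):ℝ)) + 1) * ((N:ℝ) - (((i:ℕ):ℝ) + 1)) / (N:ℝ)^2
    * Mfun r N ((i : ℕ) + 1) ((j : ℕ) + 1)) * hab

lemma reward_term (r : ℝ) (hr0 : 0 < r) (hr1 : r ≠ 1) (N : ℕ) (hN : 3 ≤ N)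
    (j : ℕ) (hj : j < N - 1) :
    (Mfun r N 1 (j + 1) + Mfun r N (N - 1) (j + 1)) * ((j : ℝ) + 1)
      = (N : ℝ) ^ 2 * (((1 + r) * (1 - r ^ (N - 1)) / (1 - r ^ N)) * (1 / ((N : ℝ) - 1 - (j : ℕ)))
        + (1 + r) * ((r ^ (N - 2 - j) * (1 - r) / (1 - r ^ N)) * (1 / ((N : ℝ) - 1 - (j : ℕ))))) := by
  have hNR : (0:ℝ) < (N:ℝ) := by positivity
  have h1r : (0:ℝ) < 1 + r := by linarith
  have h1r' : (1:ℝ) - r ≠ 0 := sub_ne_zero.mpr (Ne.symm hr1)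
  have hrN : (1:ℝ) - r ^ N ≠ 0 :=
    sub_ne_zero.mpr (Ne.symm (pow_ne_one_of_ne_one hr0 hr1 (by omega)))
  have hjw : (0:ℝ) < (N : ℝ) - 1 - (j:ℕ) := by
    have : ((j:ℕ):ℝ) < (N:ℝ) - 1 := by
      have : ((j:ℕ):ℝ) ≤ ((N-2 : ℕ):ℝ) := by exact_mod_cast (by omega : j ≤ N - 2)
      have h2 : ((N-2:ℕ):ℝ) = (N:ℝ) - 2 := by
        have : (2:ℕ) ≤ N := by omega
        push_cast [Nat.cast_sub this]
        ring
      linarith [h2 ▸ this]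
    linarith
  have hjp : (0:ℝ) < ((j:ℕ):ℝ) + 1 := by positivity
  have hNj : (0:ℝ) < (N:ℝ) - ((j:ℕ) + 1 : ℕ) := by
    push_cast
    linarith
  unfold Mfun gfun Cfun
  rw [min_eq_left (by omega : 1 ≤ j + 1), max_eq_right (by omega : 1 ≤ j + 1),
      min_eq_right (by omega : j + 1 ≤ N - 1), max_eq_left (by omega : j + 1 ≤ N - 1)]
  have e2 : r ^ N = r ^ (N - 2 - j) * r ^ (j + 1) * r := by
    rw [mul_assoc, ← pow_succ, ← pow_add]
    congr 1
    omega
  have e1 : r ^ (N - 1) = r ^ (N - 2 - j) * r ^ (j + 1) := by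
    rw [← pow_add]
    congr 1
    omega
  rw [e2, e1, pow_one]
  rw [e2] at hrN
  have hA : r ^ (N - 2 - j) ≠ 0 := by positivity
  have hB : r ^ (j + 1) ≠ 0 := by positivity
  push_cast
  push_cast at hNj hjw
  field_simp
  ring

lemma punish_term (r : ℝ) (hr0 : 0 < r) (hr1 : r ≠ 1) (N : ℕ) (hN : 3 ≤ N)
    (j : ℕ) (hj : j < N - 1) :
    (Mfun r N 1 (j + 1) + Mfun r N (N - 1) (j + 1)) * ((N : ℝ) - ((j : ℝ) + 1))
      = (N : ℝ) ^ 2 * (((1 + r) * (1 - r ^ (N - 1)) / (1 - r ^ N)) * (1 / ((j : ℝ) + 1))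
        + (1 + r) * ((r ^ (N - 2 - j) * (1 - r) / (1 - r ^ N)) * (1 / ((j : ℝ) + 1)))) := by
  have hNR : (0:ℝ) < (N:ℝ) := by positivity
  have h1r : (0:ℝ) < 1 + r := by linarith
  have h1r' : (1:ℝ) - r ≠ 0 := sub_ne_zero.mpr (Ne.symm hr1)
  have hrN : (1:ℝ) - r ^ N ≠ 0 :=
    sub_ne_zero.mpr (Ne.symm (pow_ne_one_of_ne_one hr0 hr1 (by omega)))
  have hjp : (0:ℝ) < ((j:ℕ):ℝ) + 1 := by positivity
  have hNj : (0:ℝ) < (N:ℝ) - ((j:ℕ) + 1 : ℕ) := by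
    have : ((j:ℕ) + 1 : ℕ) ≤ (N - 1 : ℕ) := by omega
    have h2 : (((j:ℕ) + 1 : ℕ):ℝ) ≤ ((N - 1 : ℕ):ℝ) := by exact_mod_cast this
    have h3 : ((N-1:ℕ):ℝ) = (N:ℝ) - 1 := by
      push_cast [Nat.cast_sub (by omega : (1:ℕ) ≤ N)]
      ring
    rw [h3] at h2
    linarith
  unfold Mfun gfun Cfun
  rw [min_eq_left (by omega : 1 ≤ j + 1), max_eq_right (by omega : 1 ≤ j + 1),
      min_eq_right (by omega : j + 1 ≤ N - 1), max_eq_left (by omega : j + 1 ≤ N - 1)]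
  have e2 : r ^ N = r ^ (N - 2 - j) * r ^ (j + 1) * r := by
    rw [mul_assoc, ← pow_succ, ← pow_add]
    congr 1
    omega
  have e1 : r ^ (N - 1) = r ^ (N - 2 - j) * r ^ (j + 1) := by
    rw [← pow_add]
    congr 1
    omega
  rw [e2, e1, pow_one]
  rw [e2] at hrN
  have hA : r ^ (N - 2 - j) ≠ 0 := by positivity
  have hB : r ^ (j + 1) ≠ 0 := by positivity
  push_cast
  push_cast at hNj
  field_simp
  ring


lemma harmonic_reflect (N : ℕ) :
    ∑ j ∈ Finset.range (N - 1), 1 / ((N : ℝ) - 1 - (j : ℕ)) = harmonicNum N := by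
  rw [harmonicNum, ← Finset.sum_range_reflect (fun j => (1 : ℝ) / ((j : ℕ) + 1)) (N - 1)]
  refine Finset.sum_congr rfl fun j hj => ?_
  rw [Finset.mem_range] at hj
  congr 1
  have h1 : (N - 1 - 1 - j : ℕ) = N - 2 - j := by omega
  rw [h1]
  have h2 : ((N - 2 - j : ℕ) : ℝ) = (N : ℝ) - 2 - (j : ℕ) := by
    have : ((N - 2 - j : ℕ) : ℝ) = ((N : ℕ) : ℝ) - ((2 + j : ℕ) : ℝ) := by
      rw [← Nat.cast_sub (by omega)]
      congr 1
      omega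
    rw [this]
    push_cast
    ring
  rw [h2]
  ring

lemma Ereward_eq (N : ℕ) (hN : 3 ≤ N) (β δ θ : ℝ) (hx : β * (θ + δ) ≠ 0) :
    Ereward N β δ θ = (θ / 2) * (N : ℝ) ^ 2 *
      (LL (Real.exp (-(β * (θ + δ)))) N * harmonicNum N
        + (1 + Real.exp (-(β * (θ + δ)))) * TTr (Real.exp (-(β * (θ + δ)))) N) := by
  have hr0 : (0:ℝ) < Real.exp (-(β * (θ + δ))) := Real.exp_pos _
  have hr1 : Real.exp (-(β * (θ + δ))) ≠ 1 := by
    rw [Ne, Real.exp_eq_one_iff]; simpa using hx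
  set r := Real.exp (-(β * (θ + δ))) with hrdef
  rw [Ereward, dif_pos hN, fund_eq N hN β δ θ hx]
  have hstep : ∀ j : Fin (N - 1),
      (MmatD N r ⟨0, by omega⟩ j + MmatD N r ⟨N - 2, by omega⟩ j) * ((j : ℕ) + 1 : ℝ)
      = (N : ℝ) ^ 2 * ((LL r N) * (1 / ((N : ℝ) - 1 - ((j : ℕ) : ℕ)))
          + (1 + r) * ((r ^ (N - 2 - (j : ℕ)) * (1 - r) / (1 - r ^ N))
            * (1 / ((N : ℝ) - 1 - ((j : ℕ) : ℕ))))) := by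
    intro j
    have h := reward_term r hr0 hr1 N hN (j : ℕ) j.isLt
    simp only [MmatD_apply, Fin.val_mk]
    rw [show (0 : ℕ) + 1 = 1 from rfl, show N - 2 + 1 = N - 1 by omega]
    rw [h, LL]
  rw [Finset.sum_congr rfl fun j _ => hstep j]
  rw [Fin.sum_univ_eq_sum_range (fun j => (N : ℝ) ^ 2 * ((LL r N) * (1 / ((N : ℝ) - 1 - (j : ℕ)))
          + (1 + r) * ((r ^ (N - 2 - j) * (1 - r) / (1 - r ^ N))
            * (1 / ((N : ℝ) - 1 - (j : ℕ)))))) (N - 1)]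
  have hsplit : ∀ j ∈ Finset.range (N - 1), (N : ℝ) ^ 2 * ((LL r N) * (1 / ((N : ℝ) - 1 - (j : ℕ)))
          + (1 + r) * ((r ^ (N - 2 - j) * (1 - r) / (1 - r ^ N))
            * (1 / ((N : ℝ) - 1 - (j : ℕ)))))
      = (N : ℝ) ^ 2 * (LL r N) * (1 / ((N : ℝ) - 1 - (j : ℕ)))
        + (N : ℝ) ^ 2 * (1 + r) * ((r ^ (N - 2 - j) * (1 - r) / (1 - r ^ N))
            * (1 / ((N : ℝ) - 1 - (j : ℕ)))) := fun j _ => by ring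
  rw [Finset.sum_congr rfl hsplit, Finset.sum_add_distrib, ← Finset.mul_sum, ← Finset.mul_sum,
    harmonic_reflect, TTr]
  ring

lemma Epunish_eq (N : ℕ) (hN : 3 ≤ N) (β δ θ : ℝ) (hx : β * (θ + δ) ≠ 0) :
    Epunish N β δ θ = (θ / 2) * (N : ℝ) ^ 2 *
      (LL (Real.exp (-(β * (θ + δ)))) N * harmonicNum N
        + (1 + Real.exp (-(β * (θ + δ)))) * TTp (Real.exp (-(β * (θ + δ)))) N) := by
  have hr0 : (0:ℝ) < Real.exp (-(β * (θ + δ))) := Real.exp_pos _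
  have hr1 : Real.exp (-(β * (θ + δ))) ≠ 1 := by
    rw [Ne, Real.exp_eq_one_iff]; simpa using hx
  set r := Real.exp (-(β * (θ + δ))) with hrdef
  rw [Epunish, dif_pos hN, fund_eq N hN β δ θ hx]
  have hstep : ∀ j : Fin (N - 1),
      (MmatD N r ⟨0, by omega⟩ j + MmatD N r ⟨N - 2, by omega⟩ j) * ((N : ℝ) - ((j : ℕ) + 1 : ℝ))
      = (N : ℝ) ^ 2 * ((LL r N) * (1 / (((j : ℕ) : ℝ) + 1))
          + (1 + r) * ((r ^ (N - 2 - (j : ℕ)) * (1 - r) / (1 - r ^ N))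
            * (1 / (((j : ℕ) : ℝ) + 1)))) := by
    intro j
    have h := punish_term r hr0 hr1 N hN (j : ℕ) j.isLt
    simp only [MmatD_apply, Fin.val_mk]
    rw [show (0 : ℕ) + 1 = 1 from rfl, show N - 2 + 1 = N - 1 by omega]
    rw [h, LL]
  rw [Finset.sum_congr rfl fun j _ => hstep j]
  rw [Fin.sum_univ_eq_sum_range (fun j => (N : ℝ) ^ 2 * ((LL r N) * (1 / ((j : ℕ) + 1 : ℝ))
          + (1 + r) * ((r ^ (N - 2 - j) * (1 - r) / (1 - r ^ N))
            * (1 / ((j : ℕ) + 1 : ℝ))))) (N - 1)]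
  have hsplit : ∀ j ∈ Finset.range (N - 1), (N : ℝ) ^ 2 * ((LL r N) * (1 / ((j : ℕ) + 1 : ℝ))
          + (1 + r) * ((r ^ (N - 2 - j) * (1 - r) / (1 - r ^ N))
            * (1 / ((j : ℕ) + 1 : ℝ))))
      = (N : ℝ) ^ 2 * (LL r N) * (1 / ((j : ℕ) + 1 : ℝ))
        + (N : ℝ) ^ 2 * (1 + r) * ((r ^ (N - 2 - j) * (1 - r) / (1 - r ^ N))
            * (1 / ((j : ℕ) + 1 : ℝ))) := fun j _ => by ring
  rw [Finset.sum_congr rfl hsplit, Finset.sum_add_distrib, ← Finset.mul_sum, ← Finset.mul_sum, TTp]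
  rw [show (∑ j ∈ Finset.range (N - 1), 1 / ((j : ℕ) + 1 : ℝ)) = harmonicNum N from rfl]
  ring

lemma ratio_nonneg {r : ℝ} (hr0 : 0 < r) (hr1 : r ≠ 1) {n : ℕ} (hn : n ≠ 0) :
    0 ≤ (1 - r) / (1 - r ^ n) := by
  rcases hr1.lt_or_gt with h | h
  · have h1 : r ^ n < 1 := pow_lt_one₀ hr0.le h hn
    exact div_nonneg (by linarith) (by linarith)
  · have h1 : 1 < r ^ n := one_lt_pow₀ h hn
    have : (1 - r) / (1 - r ^ n) = (r - 1) / (r ^ n - 1) := by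
      rw [← neg_div_neg_eq]; ring_nf
    rw [this]
    have h2 : (0:ℝ) < r ^ n - 1 := by linarith
    have h3 : (0:ℝ) ≤ r - 1 := by linarith
    positivity

lemma TT_term_nonneg {r : ℝ} (hr0 : 0 < r) (hr1 : r ≠ 1) {N : ℕ} (hN : 3 ≤ N) (k : ℕ) :
    0 ≤ r ^ k * (1 - r) / (1 - r ^ N) := by
  rw [mul_div_assoc]
  exact mul_nonneg (by positivity) (ratio_nonneg hr0 hr1 (by omega))

lemma TT_sum_le {r : ℝ} (hr0 : 0 < r) (hr1 : r ≠ 1) {N : ℕ} (hN : 3 ≤ N) :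
    ∑ j ∈ Finset.range (N - 1), r ^ (N - 2 - j) * (1 - r) / (1 - r ^ N) ≤ 1 := by
  have hsum : ∑ j ∈ Finset.range (N - 1), r ^ (N - 2 - j) * (1 - r) / (1 - r ^ N)
      = (∑ j ∈ Finset.range (N - 1), r ^ j) * (1 - r) / (1 - r ^ N) := by
    rw [Finset.sum_mul, Finset.sum_div]
    rw [← Finset.sum_range_reflect (fun j => r ^ j * (1 - r) / (1 - r ^ N)) (N - 1)]
    refine Finset.sum_congr rfl fun j hj => ?_
    rw [Finset.mem_range] at hj
    congr 2 <;> omega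
  rw [hsum, geom_sum_eq hr1]
  have hr1' : r - 1 ≠ 0 := sub_ne_zero.mpr hr1
  have hval : (r ^ (N - 1) - 1) / (r - 1) * (1 - r) = 1 - r ^ (N - 1) := by
    field_simp
    ring
  rw [hval]
  rcases hr1.lt_or_gt with h | h
  · have h1 : r ^ N < 1 := pow_lt_one₀ hr0.le h (by omega)
    rw [div_le_one (by linarith)]
    have : r ^ N ≤ r ^ (N - 1) := pow_le_pow_of_le_one hr0.le h.le (by omega)
    linarith
  · have h1 : 1 < r ^ N := one_lt_pow₀ h (by omega)
    have heq : (1 - r ^ (N - 1)) / (1 - r ^ N) = (r ^ (N - 1) - 1) / (r ^ N - 1) := by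
      rw [← neg_div_neg_eq]; ring_nf
    rw [heq, div_le_one (by linarith)]
    have : r ^ (N - 1) ≤ r ^ N := pow_le_pow_right₀ h.le (by omega)
    linarith

lemma TT_bound {r : ℝ} (hr0 : 0 < r) (hr1 : r ≠ 1) {N : ℕ} (hN : 3 ≤ N)
    (w : ℕ → ℝ) (hw0 : ∀ j, j < N - 1 → 0 < w j) (hw1 : ∀ j, j < N - 1 → w j ≤ 1) :
    0 ≤ (∑ j ∈ Finset.range (N - 1), (r ^ (N - 2 - j) * (1 - r) / (1 - r ^ N)) * w j)
      ∧ (∑ j ∈ Finset.range (N - 1), (r ^ (N - 2 - j) * (1 - r) / (1 - r ^ N)) * w j) ≤ 1 := by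
  constructor
  · refine Finset.sum_nonneg fun j hj => ?_
    rw [Finset.mem_range] at hj
    exact mul_nonneg (TT_term_nonneg hr0 hr1 hN _) (hw0 j hj).le
  · refine le_trans (Finset.sum_le_sum fun j hj => ?_) (TT_sum_le hr0 hr1 hN)
    rw [Finset.mem_range] at hj
    calc (r ^ (N - 2 - j) * (1 - r) / (1 - r ^ N)) * w j
        ≤ (r ^ (N - 2 - j) * (1 - r) / (1 - r ^ N)) * 1 :=
          mul_le_mul_of_nonneg_left (hw1 j hj) (TT_term_nonneg hr0 hr1 hN _)
      _ = r ^ (N - 2 - j) * (1 - r) / (1 - r ^ N) := mul_one _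

lemma harmonicNum_eq (N : ℕ) : harmonicNum N = ((harmonic (N - 1) : ℚ) : ℝ) := by
  rw [harmonicNum, harmonic]
  push_cast
  refine Finset.sum_congr rfl fun j _ => ?_
  rw [one_div]

lemma tendsto_harmonicNum_sub_log :
    Tendsto (fun N : ℕ => harmonicNum N - Real.log N) atTop
      (𝓝 Real.eulerMascheroniConstant) := by
  have h0 := Real.tendsto_harmonic_sub_log_add_one.comp (tendsto_sub_atTop_nat 1)
  apply h0.congr'
  filter_upwards [eventually_ge_atTop 1] with N hN1
  simp only [Function.comp_apply]
  rw [harmonicNum_eq]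
  congr 2
  rw [Nat.cast_sub (by exact_mod_cast hN1)]
  push_cast
  ring

lemma tendsto_main (b c β θ : ℝ) (hc : 0 < c) (hbc : c < b) (hβ : 0 < β) (hθ : 0 < θ)
    (E TT : ℕ → ℝ)
    (hE : ∀ N : ℕ, 3 ≤ N → β * (θ + -(c + b / ((N : ℝ) - 1))) ≠ 0 →
      E N = (θ / 2) * (N : ℝ) ^ 2 *
        (LL (rfDG b c β θ N) N * harmonicNum N + (1 + rfDG b c β θ N) * TT N))
    (hTT : ∀ N : ℕ, 3 ≤ N → rfDG b c β θ N ≠ 1 → 0 ≤ TT N ∧ TT N ≤ 1) :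
    Tendsto (fun N : ℕ =>
        E N / (((N : ℝ) ^ 2 * θ / 2) * (Real.log N + Real.eulerMascheroniConstant)))
      atTop (𝓝 (1 + Real.exp (-β * |θ - c|))) := by
  have hb' : 0 < b := lt_trans hc hbc
  -- the log denominator
  have hD : Tendsto (fun N : ℕ => Real.log N + Real.eulerMascheroniConstant) atTop atTop :=
    tendsto_atTop_add_const_right _ _ (Real.tendsto_log_atTop.comp tendsto_natCast_atTop_atTop)
  have hDinv : Tendsto (fun N : ℕ => (Real.log N + Real.eulerMascheroniConstant)⁻¹)
      atTop (𝓝 0) := hD.inv_tendsto_atTop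
  -- b/(N-1) → 0
  have hNsub : Tendsto (fun N : ℕ => (N : ℝ) - 1) atTop atTop :=
    (tendsto_atTop_add_const_right _ (-1 : ℝ) tendsto_natCast_atTop_atTop).congr
      fun N => by ring
  have hb0 : Tendsto (fun N : ℕ => b / ((N : ℝ) - 1)) atTop (𝓝 0) := by
    have h2 := hNsub.inv_tendsto_atTop.const_mul b
    simp only [mul_zero] at h2
    exact h2.congr fun N => by simp [div_eq_mul_inv]
  -- rf and its limit
  set q : ℝ := Real.exp (β * (c - θ)) with hq
  have hq0 : 0 < q := Real.exp_pos _
  have hrf : Tendsto (fun N : ℕ => rfDG b c β θ N) atTop (𝓝 q) := by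
    have harg : Tendsto (fun N : ℕ => -(β * (θ + -(c + b / ((N : ℝ) - 1))))) atTop
        (𝓝 (β * (c - θ))) := by
      have h1 : Tendsto (fun N : ℕ => β * (c - θ) + β * (b / ((N : ℝ) - 1))) atTop
          (𝓝 (β * (c - θ) + β * 0)) := tendsto_const_nhds.add (hb0.const_mul β)
      rw [mul_zero, add_zero] at h1
      exact h1.congr fun N => by ring
    exact ((Real.continuous_exp.tendsto _).comp harg).congr fun N => rfl
  have hrfpos : ∀ N : ℕ, 0 < rfDG b c β θ N := fun N => Real.exp_pos _
  -- the power formulas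
  set E₀ : ℝ := Real.exp (β * b) with hE₀
  have hE₀1 : 1 < E₀ := Real.one_lt_exp_iff.mpr (by positivity)
  have hupow : ∀ N : ℕ, 2 ≤ N → rfDG b c β θ N ^ (N - 1) = E₀ * q ^ (N - 1) := by
    intro N hN2
    have hN1 : ((N : ℝ) - 1) ≠ 0 := by
      have : (2 : ℝ) ≤ (N : ℝ) := by exact_mod_cast hN2
      linarith
    rw [rfDG, ← Real.exp_nat_mul, hq, hE₀, ← Real.exp_nat_mul, ← Real.exp_add]
    congr 1
    have hcast : ((N - 1 : ℕ) : ℝ) = (N : ℝ) - 1 := by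
      rw [Nat.cast_sub (by omega)]
      norm_num
    rw [hcast]
    field_simp
    ring
  have hLLev : ∀ᶠ N : ℕ in atTop, LL (rfDG b c β θ N) N
      = (1 + rfDG b c β θ N) * (1 - E₀ * q ^ (N - 1))
        / (1 - E₀ * q ^ (N - 1) * rfDG b c β θ N) := by
    filter_upwards [eventually_ge_atTop 2] with N hN2
    have hpN : rfDG b c β θ N ^ N = rfDG b c β θ N ^ (N - 1) * rfDG b c β θ N := by
      rw [← pow_succ]
      congr 1
      omega
    rw [LL, hpN, hupow N hN2]
  -- limit of LL, by cases
  have hLlim : Tendsto (fun N : ℕ => LL (rfDG b c β θ N) N) atTop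
      (𝓝 (1 + Real.exp (-β * |θ - c|))) := by
    rcases lt_trichotomy θ c with hlt | heq | hgt
    · -- θ < c : q > 1, powers blow up; divide through by the power
      have hq1 : 1 < q := Real.one_lt_exp_iff.mpr (by nlinarith)
      have hrfgt : ∀ N : ℕ, 2 ≤ N → 1 < rfDG b c β θ N := by
        intro N hN2
        rw [rfDG]
        apply Real.one_lt_exp_iff.mpr
        have h2 : (2:ℝ) ≤ (N:ℝ) := by exact_mod_cast hN2
        have : 0 < b / ((N : ℝ) - 1) := by
          apply div_pos hb'
          linarith
        nlinarith
      have hqinv : Tendsto (fun N : ℕ => (E₀ * q ^ (N - 1))⁻¹) atTop (𝓝 0) := by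
        have h3 : Tendsto (fun N : ℕ => (q⁻¹) ^ (N - 1)) atTop (𝓝 0) :=
          (tendsto_pow_atTop_nhds_zero_of_lt_one (by positivity)
            (inv_lt_one_of_one_lt₀ hq1)).comp (tendsto_sub_atTop_nat 1)
        have h4 := h3.const_mul E₀⁻¹
        simp only [mul_zero] at h4
        exact h4.congr fun N => by rw [mul_inv, inv_pow]
      have hF : Tendsto (fun N : ℕ => (1 + rfDG b c β θ N) * ((E₀ * q ^ (N - 1))⁻¹ - 1)
          / ((E₀ * q ^ (N - 1))⁻¹ - rfDG b c β θ N)) atTop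
          (𝓝 ((1 + q) * (0 - 1) / (0 - q))) :=
        ((tendsto_const_nhds.add hrf).mul (hqinv.sub tendsto_const_nhds)).div
          (hqinv.sub hrf) (by simp [hq0.ne'])
      have hval : (1 + q) * (0 - 1) / (0 - q) = 1 + Real.exp (-β * |θ - c|) := by
        rw [abs_of_neg (by linarith : θ - c < 0)]
        have : Real.exp (-β * -(θ - c)) = q⁻¹ := by
          rw [hq, ← Real.exp_neg]
          congr 1
          ring
        rw [this]
        rw [zero_sub, zero_sub, mul_neg_one, neg_div_neg_eq, add_div, div_self hq0.ne',
          one_div]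
        exact add_comm _ _
      rw [hval] at hF
      apply hF.congr'
      symm
      filter_upwards [hLLev, eventually_ge_atTop 2] with N hLN hN2
      rw [hLN]
      have hu0 : (0:ℝ) < E₀ * q ^ (N - 1) := by positivity
      have hur : 1 < E₀ * q ^ (N - 1) * rfDG b c β θ N := by
        have h1 : 1 ≤ q ^ (N - 1) := one_le_pow₀ hq1.le
        nlinarith [hrfgt N hN2]
      have hden : 1 - E₀ * q ^ (N - 1) * rfDG b c β θ N ≠ 0 := by linarith
      rw [div_eq_div_iff hden (by
        intro hc0
        apply hden
        have : (E₀ * q ^ (N - 1))⁻¹ = rfDG b c β θ N := by linarith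
        rw [← this]
        field_simp
        norm_num)]
      field_simp
    · -- θ = c
      subst heq
      have hq1 : q = 1 := by rw [hq]; simp
      have hne : (1:ℝ) - E₀ ≠ 0 := sub_ne_zero.mpr hE₀1.ne
      have hval : (1 + q) * (1 - E₀ * 1) / (1 - E₀ * 1 * q)
          = 1 + Real.exp (-β * |θ - θ|) := by
        rw [hq1, mul_one, mul_one, sub_self, abs_zero, mul_zero, Real.exp_zero,
          mul_div_assoc, div_self hne]
        norm_num
      have hF : Tendsto (fun N : ℕ => (1 + rfDG b θ β θ N) * (1 - E₀ * q ^ (N - 1))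
          / (1 - E₀ * q ^ (N - 1) * rfDG b θ β θ N)) atTop
          (𝓝 ((1 + q) * (1 - E₀ * 1) / (1 - E₀ * 1 * q))) := by
        have hpow : Tendsto (fun N : ℕ => q ^ (N - 1)) atTop (𝓝 1) := by
          simp only [hq1, one_pow]
          exact tendsto_const_nhds
        exact ((tendsto_const_nhds.add hrf).mul
            (tendsto_const_nhds.sub (tendsto_const_nhds.mul hpow))).div
          (tendsto_const_nhds.sub ((tendsto_const_nhds.mul hpow).mul hrf))
          (by rw [hq1, mul_one, mul_one]; exact sub_ne_zero.mpr hE₀1.ne)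
      rw [hval] at hF
      apply hF.congr'
      symm
      exact hLLev
    · -- θ > c : q < 1, powers vanish
      have hq1 : q < 1 := Real.exp_lt_one_iff.mpr (by nlinarith)
      have hu : Tendsto (fun N : ℕ => E₀ * q ^ (N - 1)) atTop (𝓝 0) := by
        have h3 : Tendsto (fun N : ℕ => q ^ (N - 1)) atTop (𝓝 0) :=
          (tendsto_pow_atTop_nhds_zero_of_lt_one hq0.le hq1).comp (tendsto_sub_atTop_nat 1)
        have h4 := h3.const_mul E₀
        simpa using h4
      have hF : Tendsto (fun N : ℕ => (1 + rfDG b c β θ N) * (1 - E₀ * q ^ (N - 1))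
          / (1 - E₀ * q ^ (N - 1) * rfDG b c β θ N)) atTop
          (𝓝 ((1 + q) * (1 - 0) / (1 - 0 * q))) :=
        ((tendsto_const_nhds.add hrf).mul (tendsto_const_nhds.sub
          (hu.congr fun N => rfl))).div
          (tendsto_const_nhds.sub ((hu).mul hrf)) (by norm_num)
      have hval : (1 + q) * (1 - 0) / (1 - 0 * q) = 1 + Real.exp (-β * |θ - c|) := by
        rw [abs_of_pos (by linarith : 0 < θ - c), hq]
        have : β * (c - θ) = -β * (θ - c) := by ring
        rw [this]
        norm_num
      rw [hval] at hF
      apply hF.congr'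
      symm
      exact hLLev
  -- harmonic / log limit
  have hHD : Tendsto (fun N : ℕ =>
      harmonicNum N / (Real.log N + Real.eulerMascheroniConstant)) atTop (𝓝 1) := by
    have h2 : Tendsto (fun N : ℕ =>
        harmonicNum N - Real.log N - Real.eulerMascheroniConstant) atTop (𝓝 0) := by
      simpa using tendsto_harmonicNum_sub_log.sub_const Real.eulerMascheroniConstant
    have h3 := h2.mul hDinv
    simp only [zero_mul] at h3
    have h4 := tendsto_const_nhds (x := (1:ℝ)) (f := atTop (α := ℕ)) |>.add h3
    simp only [add_zero] at h4
    apply h4.congr'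
    filter_upwards [hD.eventually_gt_atTop 0] with N hD0
    field_simp
    ring
  -- good set
  have hgood : ∀ᶠ N : ℕ in atTop, 3 ≤ N ∧ β * (θ + -(c + b / ((N : ℝ) - 1))) ≠ 0 := by
    rcases le_or_gt θ c with h | h
    · filter_upwards [eventually_ge_atTop 3] with N hN3
      refine ⟨hN3, ?_⟩
      have h2 : (3:ℝ) ≤ (N:ℝ) := by exact_mod_cast hN3
      have hpos : 0 < b / ((N : ℝ) - 1) := div_pos hb' (by linarith)
      have : θ + -(c + b / ((N : ℝ) - 1)) < 0 := by linarith
      exact (mul_neg_of_pos_of_neg hβ this).ne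
    · have hev := hb0.eventually (eventually_lt_nhds (by linarith : (0:ℝ) < θ - c))
      filter_upwards [eventually_ge_atTop 3, hev] with N hN3 hlt
      refine ⟨hN3, ?_⟩
      have : 0 < θ + -(c + b / ((N : ℝ) - 1)) := by linarith
      exact (mul_pos hβ this).ne'
  -- remainder term
  have hTTev : ∀ᶠ N : ℕ in atTop, 0 ≤ TT N ∧ TT N ≤ 1 := by
    filter_upwards [hgood] with N ⟨hN3, hx⟩
    refine hTT N hN3 ?_
    rw [rfDG, Ne, Real.exp_eq_one_iff]
    simpa using hx
  have hrem : Tendsto (fun N : ℕ => ((1 + rfDG b c β θ N) * TT N)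
      / (Real.log N + Real.eulerMascheroniConstant)) atTop (𝓝 0) := by
    have hupper : Tendsto (fun N : ℕ => (1 + rfDG b c β θ N)
        * (Real.log N + Real.eulerMascheroniConstant)⁻¹) atTop (𝓝 0) := by
      have := ((tendsto_const_nhds (x := (1:ℝ)) (f := atTop (α := ℕ))).add hrf).mul hDinv
      simpa using this
    apply tendsto_of_tendsto_of_tendsto_of_le_of_le' tendsto_const_nhds hupper
    · filter_upwards [hTTev, hD.eventually_gt_atTop 0] with N hT hD0
      exact div_nonneg (mul_nonneg (by linarith [hrfpos N]) hT.1) hD0.le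
    · filter_upwards [hTTev, hD.eventually_gt_atTop 0] with N hT hD0
      rw [div_eq_mul_inv]
      have h1 : (1 + rfDG b c β θ N) * TT N ≤ 1 + rfDG b c β θ N :=
        mul_le_of_le_one_right (by linarith [hrfpos N]) hT.2
      exact mul_le_mul_of_nonneg_right h1 (by positivity)
  -- assemble
  have hfinal : Tendsto (fun N : ℕ =>
      LL (rfDG b c β θ N) N
        * (harmonicNum N / (Real.log N + Real.eulerMascheroniConstant))
      + ((1 + rfDG b c β θ N) * TT N) / (Real.log N + Real.eulerMascheroniConstant))
      atTop (𝓝 ((1 + Real.exp (-β * |θ - c|)) * 1 + 0)) := (hLlim.mul hHD).add hrem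
  rw [mul_one, add_zero] at hfinal
  apply hfinal.congr'
  filter_upwards [hgood, hD.eventually_gt_atTop 0] with N hg hD0
  obtain ⟨hN3, hx⟩ := hg
  rw [hE N hN3 hx]
  have hN0 : (0:ℝ) < (N:ℝ) := by
    have : (3:ℝ) ≤ (N:ℝ) := by exact_mod_cast hN3
    linarith
  have hc2 : (N : ℝ) ^ 2 * θ / 2 ≠ 0 := by positivity
  rw [show (θ / 2) * (N : ℝ) ^ 2 *
      (LL (rfDG b c β θ N) N * harmonicNum N + (1 + rfDG b c β θ N) * TT N)
      = ((N : ℝ) ^ 2 * θ / 2) *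
      (LL (rfDG b c β θ N) N * harmonicNum N + (1 + rfDG b c β θ N) * TT N) from by ring]
  rw [mul_div_mul_left _ _ hc2, add_div, mul_div_assoc]
  ring

lemma cast_bound {N j : ℕ} (h : j < N - 1) (h3 : 3 ≤ N) : ((j:ℕ):ℝ) ≤ (N:ℝ) - 2 := by
  have h1 : (j + 2 : ℕ) ≤ N := by omega
  have h2 := (Nat.cast_le (α := ℝ)).mpr h1
  push_cast at h2
  linarith

/-- In the Donation Game (δ = −(c + b/(N−1))), for fixed b > c > 0, β > 0, θ > 0,
lim_{N→∞} E_N(θ) / ((N²θ/2)(log N + γ)) = 1 + e^{−β|θ−c|}, for E_N either the reward or the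
punishment cost, where γ is the Euler–Mascheroni constant. -/
theorem infinite_population_limit_DG (b c β θ : ℝ) (hc : 0 < c) (hbc : c < b)
    (hβ : 0 < β) (hθ : 0 < θ) :
    Tendsto (fun N : ℕ =>
        Ereward N β (-(c + b / ((N : ℝ) - 1))) θ /
          (((N : ℝ) ^ 2 * θ / 2) * (Real.log N + Real.eulerMascheroniConstant)))
      atTop (𝓝 (1 + Real.exp (-β * |θ - c|))) ∧
    Tendsto (fun N : ℕ =>
        Epunish N β (-(c + b / ((N : ℝ) - 1))) θ /
          (((N : ℝ) ^ 2 * θ / 2) * (Real.log N + Real.eulerMascheroniConstant)))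
      atTop (𝓝 (1 + Real.exp (-β * |θ - c|))) := by
  constructor
  · apply tendsto_main b c β θ hc hbc hβ hθ
      (fun N => Ereward N β (-(c + b / ((N : ℝ) - 1))) θ)
      (fun N => TTr (rfDG b c β θ N) N)
    · intro N hN3 hx
      exact Ereward_eq N hN3 β (-(c + b / ((N : ℝ) - 1))) θ hx
    · intro N hN3 hne
      have h := TT_bound (Real.exp_pos _) hne hN3 (fun j => 1 / ((N : ℝ) - 1 - (j : ℕ)))
        (fun j hj => by
          have := cast_bound hj hN3
          exact one_div_pos.mpr (by linarith))
        (fun j hj => by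
          have := cast_bound hj hN3
          rw [div_le_one (by linarith)]
          linarith)
      simpa [TTr, rfDG] using h
  · apply tendsto_main b c β θ hc hbc hβ hθ
      (fun N => Epunish N β (-(c + b / ((N : ℝ) - 1))) θ)
      (fun N => TTp (rfDG b c β θ N) N)
    · intro N hN3 hx
      exact Epunish_eq N hN3 β (-(c + b / ((N : ℝ) - 1))) θ hx
    · intro N hN3 hne
      have h := TT_bound (Real.exp_pos _) hne hN3 (fun j => 1 / ((j : ℕ) + 1 : ℝ))
        (fun j hj => by positivity)
        (fun j hj => by
          rw [div_le_one (by positivity)]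
          have : (0:ℝ) ≤ (j:ℕ) := Nat.cast_nonneg j
          linarith)
      simpa [TTp, rfDG] using h
end

section
/- Fix an integer N ≥ 3 and reals δ, θ ∈ ℝ, and regard E_r and E_p as functions of the selection intensity β > 0 as well. Then lim_{β→0⁺} E_r(θ) = lim_{β→0⁺} E_p(θ) = N²·θ·H_N. -/
open Real Finset Filter Topology Matrix

noncomputable def M0 (N : ℕ) : Matrix (Fin (N - 1)) (Fin (N - 1)) ℝ :=
  fun i j =>
    if (i : ℕ) ≤ (j : ℕ) then 2 * (N : ℝ) * ((i : ℕ) + 1 : ℝ) / ((j : ℕ) + 1 : ℝ)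
    else 2 * (N : ℝ) * ((N : ℝ) - ((i : ℕ) + 1 : ℝ)) / ((N : ℝ) - ((j : ℕ) + 1 : ℝ))

lemma sum_indic {m : ℕ} (t : ℕ) (F : Fin m → ℝ) :
    ∑ j : Fin m, (if (j : ℕ) = t then F j else 0)
      = if h : t < m then F ⟨t, h⟩ else 0 := by
  split_ifs with h
  · rw [Finset.sum_eq_single ⟨t, h⟩]
    · simp
    · intro j _ hj
      rw [if_neg]
      intro hc; exact hj (Fin.ext hc)
    · simp
  · apply Finset.sum_eq_zero
    intro j _
    rw [if_neg]
    intro hc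
    exact h (hc ▸ j.isLt)

lemma sum_indic2 {m : ℕ} (t : ℕ) (F : Fin m → ℝ) :
    ∑ j : Fin m, (if (j : ℕ) + 1 = t then F j else 0)
      = if h : t - 1 < m ∧ 1 ≤ t then F ⟨t - 1, h.1⟩ else 0 := by
  split_ifs with h
  · rw [Finset.sum_eq_single ⟨t - 1, h.1⟩]
    · rw [if_pos]
      simp only []
      omega
    · intro j _ hj
      rw [if_neg]
      intro hc
      apply hj
      apply Fin.ext
      simp only []
      omega
    · simp
  · apply Finset.sum_eq_zero
    intro j _
    rw [if_neg]
    intro hc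
    exact h ⟨by omega, by omega⟩

set_option maxHeartbeats 1600000 in
lemma key (N : ℕ) (hN : 3 ≤ N) (δ θ : ℝ) :
    (1 - Umat N 0 δ θ) * M0 N = 1 := by
  ext i k
  rw [Matrix.mul_apply, Matrix.one_apply]
  have hiN : (i : ℕ) < N - 1 := i.isLt
  have hkN : (k : ℕ) < N - 1 := k.isLt
  set p : ℝ := ((i : ℕ) + 1 : ℝ) * ((N : ℝ) - ((i : ℕ) + 1 : ℝ)) / (N : ℝ) ^ 2 with hp
  have hsummand : ∀ j : Fin (N - 1),
      (1 - Umat N 0 δ θ) i j * M0 N j k =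
        (if (j : ℕ) = (i : ℕ) then p * M0 N j k else 0)
      + (if (j : ℕ) = (i : ℕ) + 1 then (-(p / 2)) * M0 N j k else 0)
      + (if (j : ℕ) + 1 = (i : ℕ) then (-(p / 2)) * M0 N j k else 0) := by
    intro j
    rw [Matrix.sub_apply, Matrix.one_apply]
    simp only [Umat, zero_mul, neg_zero, Real.exp_zero, Fin.ext_iff, ← hp]
    split_ifs <;> first | ring1 | (exfalso; omega)
  rw [Finset.sum_congr rfl (fun j _ => hsummand j), Finset.sum_add_distrib,
    Finset.sum_add_distrib, sum_indic, sum_indic, sum_indic2]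
  rw [dif_pos hiN]
  simp only [M0, Fin.ext_iff, Fin.val_mk]
  rw [hp]
  have hNR : (3:ℝ) ≤ (N:ℝ) := by exact_mod_cast hN
  have hNne : (N:ℝ) ≠ 0 := by linarith
  have hkR : ((k:ℕ):ℝ) + 1 < (N:ℝ) := by exact_mod_cast (by omega : (k:ℕ)+1 < N)
  have hiR : ((i:ℕ):ℝ) + 1 < (N:ℝ) := by exact_mod_cast (by omega : (i:ℕ)+1 < N)
  have hk0 : (0:ℝ) ≤ ((k:ℕ):ℝ) := Nat.cast_nonneg _
  have hc1 : ((k:ℕ):ℝ) + 1 ≠ 0 := by linarith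
  have hc2 : (N:ℝ) - (((k:ℕ):ℝ) + 1) ≠ 0 := by linarith
  have hd1 : (N:ℝ) - 2 + 1 ≠ 0 := by intro h; linarith
  have hd2 : (N:ℝ) - ((N:ℝ) - 2 + 1) ≠ 0 := by intro h; linarith
  have hd3 : (N:ℝ) - 3 + 1 ≠ 0 := by intro h; linarith
  have hd4 : (N:ℝ) - ((N:ℝ) - 3 + 1) ≠ 0 := by intro h; linarith
  have hd5 : (N:ℝ) - (0 + 1) ≠ 0 := by intro h; linarith
  have hd6 : (N:ℝ) - 1 ≠ 0 := by intro h; linarith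
  split_ifs <;>
  first
  | (exfalso; omega)
  | (push_cast;
     (try rw [Nat.cast_sub (by omega : 1 ≤ (i:ℕ))]);
     push_cast;
     (try rw [(by have h := (by omega : (i:ℕ) + 2 = N); have h2 : ((i:ℕ):ℝ) + 2 = (N:ℝ) := (by exact_mod_cast h); linarith : ((i:ℕ):ℝ) = (N:ℝ) - 2)]);
     (try rw [(by have h := (by omega : (k:ℕ) + 2 = N); have h2 : ((k:ℕ):ℝ) + 2 = (N:ℝ) := (by exact_mod_cast h); linarith : ((k:ℕ):ℝ) = (N:ℝ) - 2)]);
     (try rw [(by have h := (by omega : (k:ℕ) + 3 = N); have h2 : ((k:ℕ):ℝ) + 3 = (N:ℝ) := (by exact_mod_cast h); linarith : ((k:ℕ):ℝ) = (N:ℝ) - 3)]);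
     (try rw [(by exact_mod_cast (by omega : (i:ℕ) = 0) : ((i:ℕ):ℝ) = 0)]);
     (try rw [(by exact_mod_cast (by omega : (k:ℕ) = 0) : ((k:ℕ):ℝ) = 0)]);
     (try rw [(by exact_mod_cast (by omega : (i:ℕ) = (k:ℕ)) : ((i:ℕ):ℝ) = ((k:ℕ):ℝ))]);
     (try rw [(by exact_mod_cast (by omega : (i:ℕ) = (k:ℕ)+1) : ((i:ℕ):ℝ) = ((k:ℕ):ℝ) + 1)]);
     (try norm_num);
     field_simp;
     ring1)

lemma fund_zero (N : ℕ) (hN : 3 ≤ N) (δ θ : ℝ) : fund N 0 δ θ = M0 N :=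
  Matrix.inv_eq_right_inv (key N hN δ θ)

lemma det_ne (N : ℕ) (hN : 3 ≤ N) (δ θ : ℝ) : (1 - Umat N 0 δ θ).det ≠ 0 := by
  have h : IsUnit (1 - Umat N 0 δ θ) :=
    ⟨⟨_, M0 N, key N hN δ θ, mul_eq_one_comm.mp (key N hN δ θ)⟩, rfl⟩
  exact ((Matrix.isUnit_iff_isUnit_det _).mp h).ne_zero

lemma cont_entries (N : ℕ) (δ θ : ℝ) : Continuous fun β : ℝ => (1 - Umat N β δ θ) := by
  refine continuous_matrix ?_
  intro i j
  simp only [Matrix.sub_apply, Matrix.one_apply, Umat]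
  apply Continuous.sub continuous_const
  have h1 : Continuous fun β : ℝ => 1 + Real.exp (-(β * (θ + δ))) := by continuity
  have h2 : Continuous fun β : ℝ => 1 + Real.exp (β * (θ + δ)) := by continuity
  have e1 : ∀ β : ℝ, 1 + Real.exp (-(β * (θ + δ))) ≠ 0 := fun β => by positivity
  have e2 : ∀ β : ℝ, 1 + Real.exp (β * (θ + δ)) ≠ 0 := fun β => by positivity
  split_ifs
  · exact Continuous.div continuous_const h1 e1
  · exact Continuous.div continuous_const h2 e2
  · exact ((continuous_const.sub (Continuous.div continuous_const h1 e1)).sub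
      (Continuous.div continuous_const h2 e2))
  · exact continuous_const

lemma tendsto_fund (N : ℕ) (hN : 3 ≤ N) (δ θ : ℝ) (i j : Fin (N - 1)) :
    Tendsto (fun β : ℝ => fund N β δ θ i j) (𝓝 0) (𝓝 (M0 N i j)) := by
  have hc := cont_entries N δ θ
  have hdet : Continuous fun β : ℝ => (1 - Umat N β δ θ).det := hc.matrix_det
  have hadj : Continuous fun β : ℝ => (1 - Umat N β δ θ).adjugate := hc.matrix_adjugate
  have h1 : ContinuousAt (fun β : ℝ => ((1 - Umat N β δ θ).det)⁻¹) 0 :=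
    (hdet.continuousAt).inv₀ (det_ne N hN δ θ)
  have h2 : ContinuousAt (fun β : ℝ => (1 - Umat N β δ θ).adjugate i j) 0 :=
    (hadj.matrix_elem i j).continuousAt
  have h3 : ContinuousAt (fun β : ℝ => fund N β δ θ i j) 0 := by
    have heq : (fun β : ℝ => fund N β δ θ i j) =
        fun β : ℝ => ((1 - Umat N β δ θ).det)⁻¹ * (1 - Umat N β δ θ).adjugate i j := by
      funext β
      rw [fund, Matrix.inv_def, Matrix.smul_apply, Ring.inverse_eq_inv, smul_eq_mul]
    rw [heq]
    exact h1.mul h2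
  have h4 := h3.tendsto
  rwa [fund_zero N hN δ θ] at h4

lemma M0_rows (N : ℕ) (hN : 3 ≤ N) (j : Fin (N - 1)) :
    M0 N ⟨0, by omega⟩ j = 2 * (N : ℝ) / (((j : ℕ) : ℝ) + 1) ∧
    M0 N ⟨N - 2, by omega⟩ j = 2 * (N : ℝ) / ((N : ℝ) - (((j : ℕ) : ℝ) + 1)) := by
  have hj := j.isLt
  have hNR : (3 : ℝ) ≤ (N : ℝ) := by exact_mod_cast hN
  have h1 : ((j : ℕ) : ℝ) + 1 ≠ 0 := by positivity
  have hjR : ((j : ℕ) : ℝ) + 1 < (N : ℝ) := by exact_mod_cast (by omega : (j : ℕ) + 1 < N)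
  have h2 : (N : ℝ) - (((j : ℕ) : ℝ) + 1) ≠ 0 := by intro h; linarith
  constructor
  · simp only [M0, Fin.val_mk]
    rw [if_pos (by omega : 0 ≤ (j : ℕ))]
    norm_num
  · simp only [M0, Fin.val_mk]
    by_cases hcase : N - 2 ≤ (j : ℕ)
    · rw [if_pos hcase]
      have hje : ((j : ℕ) : ℝ) = (N : ℝ) - 2 := by
        have hj2 : (j : ℕ) + 2 = N := by omega
        have := congrArg (fun t : ℕ => (t : ℝ)) hj2
        push_cast at this
        linarith
      have hN2 : ((N - 2 : ℕ) : ℝ) = (N : ℝ) - 2 := by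
        rw [Nat.cast_sub (by omega : 2 ≤ N)]; norm_num
      rw [hje, hN2]
      have e1 : (N:ℝ) - 2 + 1 ≠ 0 := by intro h; linarith
      have e2 : (N:ℝ) - ((N:ℝ) - 2 + 1) ≠ 0 := by intro h; linarith
      field_simp
      ring
    · rw [if_neg hcase]
      have hN2 : ((N - 2 : ℕ) : ℝ) = (N : ℝ) - 2 := by
        rw [Nat.cast_sub (by omega : 2 ≤ N)]; norm_num
      rw [hN2]
      congr 1
      ring

lemma sum_reflect_harm (N : ℕ) (hN : 3 ≤ N) :
    ∑ j : Fin (N - 1), 2 * (N : ℝ) ^ 2 / ((N : ℝ) - (((j : ℕ) : ℝ) + 1))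
      = 2 * (N : ℝ) ^ 2 * harmonicNum N := by
  rw [harmonicNum, ← Finset.sum_range_reflect (fun j => (1 : ℝ) / ((j : ℕ) + 1)) (N - 1),
    Finset.mul_sum]
  rw [show (∑ j : Fin (N - 1), 2 * (N : ℝ) ^ 2 / ((N : ℝ) - (((j : ℕ) : ℝ) + 1)))
      = ∑ j ∈ Finset.range (N - 1), 2 * (N : ℝ) ^ 2 / ((N : ℝ) - (((j : ℕ) : ℝ) + 1)) from
    Fin.sum_univ_eq_sum_range (fun m => 2 * (N : ℝ) ^ 2 / ((N : ℝ) - ((m : ℝ) + 1))) (N - 1)]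
  apply Finset.sum_congr rfl
  intro j hj
  simp only [Finset.mem_range] at hj
  have hcast : ((N - 1 - 1 - j : ℕ) : ℝ) + 1 = (N : ℝ) - (((j : ℕ) : ℝ) + 1) := by
    have h2 : (N - 1 - 1 - j) + (j + 2) = N := by omega
    have := congrArg (fun t : ℕ => (t : ℝ)) h2
    push_cast at this
    linarith
  rw [hcast, mul_one_div]

lemma harm_pos_sum (N : ℕ) (hN : 3 ≤ N) :
    ∑ j : Fin (N - 1), 2 * (N : ℝ) ^ 2 / (((j : ℕ) : ℝ) + 1)
      = 2 * (N : ℝ) ^ 2 * harmonicNum N := by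
  rw [harmonicNum, Finset.mul_sum]
  rw [show (∑ j : Fin (N - 1), 2 * (N : ℝ) ^ 2 / (((j : ℕ) : ℝ) + 1))
      = ∑ j ∈ Finset.range (N - 1), 2 * (N : ℝ) ^ 2 / (((j : ℕ) : ℝ) + 1) from
    Fin.sum_univ_eq_sum_range (fun m => 2 * (N : ℝ) ^ 2 / ((m : ℝ) + 1)) (N - 1)]
  apply Finset.sum_congr rfl
  intro j hj
  rw [mul_one_div]

/-- For fixed N ≥ 3 and δ, θ ∈ ℝ, regarding E_r and E_p as functions of the
selection intensity β > 0, lim_{β→0⁺} E_r(θ) = lim_{β→0⁺} E_p(θ) = N²·θ·H_N. -/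
theorem weak_selection_limit (N : ℕ) (hN : 3 ≤ N) (δ θ : ℝ) :
    Tendsto (fun β : ℝ => Ereward N β δ θ) (𝓝[>] 0)
      (𝓝 ((N : ℝ) ^ 2 * θ * harmonicNum N)) ∧
    Tendsto (fun β : ℝ => Epunish N β δ θ) (𝓝[>] 0)
      (𝓝 ((N : ℝ) ^ 2 * θ * harmonicNum N)) := by
  have hNR : (3 : ℝ) ≤ (N : ℝ) := by exact_mod_cast hN
  have hfacts : ∀ j : Fin (N - 1),
      ((j : ℕ) : ℝ) + 1 ≠ 0 ∧ (N : ℝ) - (((j : ℕ) : ℝ) + 1) ≠ 0 := by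
    intro j
    have hj := j.isLt
    have hjR : ((j : ℕ) : ℝ) + 1 < (N : ℝ) := by exact_mod_cast (by omega : (j : ℕ) + 1 < N)
    exact ⟨by positivity, by intro h; linarith⟩
  constructor
  · have hterm : ∀ j : Fin (N - 1), Tendsto (fun β : ℝ =>
        (fund N β δ θ ⟨0, by omega⟩ j + fund N β δ θ ⟨N - 2, by omega⟩ j) * ((j : ℕ) + 1 : ℝ))
        (𝓝 0) (𝓝 ((M0 N ⟨0, by omega⟩ j + M0 N ⟨N - 2, by omega⟩ j) * ((j : ℕ) + 1 : ℝ))) :=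
      fun j => (Tendsto.add (tendsto_fund N hN δ θ _ j) (tendsto_fund N hN δ θ _ j)).mul_const _
    have hsum : Tendsto (fun β : ℝ => Ereward N β δ θ) (𝓝 0)
        (𝓝 ((θ / 2) * ∑ j : Fin (N - 1),
          (M0 N ⟨0, by omega⟩ j + M0 N ⟨N - 2, by omega⟩ j) * ((j : ℕ) + 1 : ℝ))) := by
      have heq : (fun β : ℝ => Ereward N β δ θ) = fun β : ℝ => (θ / 2) * ∑ j : Fin (N - 1),
          (fund N β δ θ ⟨0, by omega⟩ j + fund N β δ θ ⟨N - 2, by omega⟩ j)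
            * ((j : ℕ) + 1 : ℝ) := by
        funext β
        simp only [Ereward]
        rw [dif_pos hN]
      rw [heq]
      exact ((tendsto_finset_sum _ (fun j _ => hterm j)).const_mul _)
    have hval : (θ / 2) * (∑ j : Fin (N - 1),
        (M0 N ⟨0, by omega⟩ j + M0 N ⟨N - 2, by omega⟩ j) * ((j : ℕ) + 1 : ℝ))
          = (N : ℝ) ^ 2 * θ * harmonicNum N := by
      have h1 : ∀ j : Fin (N - 1), (M0 N ⟨0, by omega⟩ j + M0 N ⟨N - 2, by omega⟩ j)
          * ((j : ℕ) + 1 : ℝ) = 2 * (N : ℝ) ^ 2 / ((N : ℝ) - (((j : ℕ) : ℝ) + 1)) := by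
        intro j
        obtain ⟨ha, hb⟩ := M0_rows N hN j
        obtain ⟨e1, e2⟩ := hfacts j
        rw [ha, hb]
        field_simp
        ring
      rw [Finset.sum_congr rfl (fun j _ => h1 j), sum_reflect_harm N hN]
      ring
    rw [← hval]
    exact hsum.mono_left nhdsWithin_le_nhds
  · have hterm : ∀ j : Fin (N - 1), Tendsto (fun β : ℝ =>
        (fund N β δ θ ⟨0, by omega⟩ j + fund N β δ θ ⟨N - 2, by omega⟩ j)
          * ((N : ℝ) - ((j : ℕ) + 1 : ℝ)))
        (𝓝 0) (𝓝 ((M0 N ⟨0, by omega⟩ j + M0 N ⟨N - 2, by omega⟩ j)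
          * ((N : ℝ) - ((j : ℕ) + 1 : ℝ)))) :=
      fun j => (Tendsto.add (tendsto_fund N hN δ θ _ j) (tendsto_fund N hN δ θ _ j)).mul_const _
    have hsum : Tendsto (fun β : ℝ => Epunish N β δ θ) (𝓝 0)
        (𝓝 ((θ / 2) * ∑ j : Fin (N - 1),
          (M0 N ⟨0, by omega⟩ j + M0 N ⟨N - 2, by omega⟩ j)
            * ((N : ℝ) - ((j : ℕ) + 1 : ℝ)))) := by
      have heq : (fun β : ℝ => Epunish N β δ θ) = fun β : ℝ => (θ / 2) * ∑ j : Fin (N - 1),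
          (fund N β δ θ ⟨0, by omega⟩ j + fund N β δ θ ⟨N - 2, by omega⟩ j)
            * ((N : ℝ) - ((j : ℕ) + 1 : ℝ)) := by
        funext β
        simp only [Epunish]
        rw [dif_pos hN]
      rw [heq]
      exact ((tendsto_finset_sum _ (fun j _ => hterm j)).const_mul _)
    have hval : (θ / 2) * (∑ j : Fin (N - 1),
        (M0 N ⟨0, by omega⟩ j + M0 N ⟨N - 2, by omega⟩ j) * ((N : ℝ) - ((j : ℕ) + 1 : ℝ)))
          = (N : ℝ) ^ 2 * θ * harmonicNum N := by
      have h1 : ∀ j : Fin (N - 1), (M0 N ⟨0, by omega⟩ j + M0 N ⟨N - 2, by omega⟩ j)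
          * ((N : ℝ) - ((j : ℕ) + 1 : ℝ)) = 2 * (N : ℝ) ^ 2 / (((j : ℕ) : ℝ) + 1) := by
        intro j
        obtain ⟨ha, hb⟩ := M0_rows N hN j
        obtain ⟨e1, e2⟩ := hfacts j
        rw [ha, hb]
        field_simp
        ring
      rw [Finset.sum_congr rfl (fun j _ => h1 j), harm_pos_sum N hN]
      ring
    rw [← hval]
    exact hsum.mono_left nhdsWithin_le_nhds
end

section
/- For every integer N ≥ 3, all real β > 0, δ ∈ ℝ and θ > 0: E_r(θ) < E_p(θ) if θ < −δ; E_r(θ) = E_p(θ) if θ = −δ; and E_r(θ) > E_p(θ) if θ > −δ. -/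
open Real Finset Filter Topology Matrix

namespace RVP

noncomputable def rr (β δ θ : ℝ) : ℝ := Real.exp (-(β * (θ + δ)))
noncomputable def aa (β δ θ : ℝ) : ℝ := (1 + Real.exp (-(β * (θ + δ))))⁻¹
noncomputable def pp (N k : ℕ) : ℝ := ((k : ℕ) + 1 : ℝ) * ((N : ℝ) - ((k : ℕ) + 1 : ℝ)) / (N : ℝ) ^ 2

lemma rr_pos (β δ θ : ℝ) : 0 < rr β δ θ := Real.exp_pos _
lemma aa_pos (β δ θ : ℝ) : 0 < aa β δ θ := by
  unfold aa; positivity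

lemma pp_pos {N k : ℕ} (hN : 3 ≤ N) (hk : k < N - 1) : 0 < pp N k := by
  unfold pp
  have h1 : (0:ℝ) < (k:ℝ) + 1 := by positivity
  have h2 : (0:ℝ) < (N:ℝ) - ((k:ℝ) + 1) := by
    have : (k:ℝ) + 1 < (N:ℝ) := by
      have : (k:ℕ) + 1 < N := by omega
      exact_mod_cast this
    linarith
  have h3 : (0:ℝ) < (N:ℝ)^2 := by positivity
  positivity

lemma div_exp_neg (β δ θ q : ℝ) : q / (1 + Real.exp (-(β * (θ + δ)))) = aa β δ θ * q := by
  rw [aa, div_eq_mul_inv, mul_comm]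

lemma inv_one_add_exp (β δ θ : ℝ) :
    (1 + Real.exp (β * (θ + δ)))⁻¹ = aa β δ θ * rr β δ θ := by
  unfold aa rr
  rw [Real.exp_neg]
  have hE : 0 < Real.exp (β * (θ + δ)) := Real.exp_pos _
  rw [← mul_inv]
  congr 1
  field_simp
  ring

lemma div_exp_pos (β δ θ q : ℝ) : q / (1 + Real.exp (β * (θ + δ))) = aa β δ θ * rr β δ θ * q := by
  rw [div_eq_mul_inv, inv_one_add_exp, mul_comm]

noncomputable def Vext (N : ℕ) (v : Fin (N - 1) → ℝ) : ℕ → ℝ :=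
  fun m => if h : 1 ≤ m ∧ m ≤ N - 1 then v ⟨m - 1, by omega⟩ else 0

lemma fin_sum_eq {n : ℕ} (m : ℕ) (F : Fin n → ℝ) :
    (∑ j : Fin n, if (j : ℕ) = m then F j else 0) = if h : m < n then F ⟨m, h⟩ else 0 := by
  split_ifs with h
  · rw [Finset.sum_eq_single ⟨m, h⟩]
    · simp
    · intro j _ hj
      rw [if_neg]
      simpa [Fin.ext_iff] using hj
    · simp
  · refine Finset.sum_eq_zero fun j _ => ?_
    have := j.isLt
    rw [if_neg (by omega)]

lemma fin_sum_eq' {n : ℕ} (m : ℕ) (F : Fin n → ℝ) :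
    (∑ j : Fin n, if (j : ℕ) + 1 = m then F j else 0)
      = if h : m - 1 < n ∧ 1 ≤ m then F ⟨m - 1, h.1⟩ else 0 := by
  split_ifs with h
  · rw [Finset.sum_eq_single ⟨m - 1, h.1⟩]
    · rw [if_pos (show m - 1 + 1 = m by omega)]
    · intro j _ hj
      exact if_neg (fun hh => hj (Fin.ext (show (j:ℕ) = m - 1 by omega)))
    · simp
  · refine Finset.sum_eq_zero fun j _ => ?_
    have := j.isLt
    rw [if_neg (by omega)]

lemma key (N : ℕ) (β δ θ : ℝ) (hN : 3 ≤ N) (v : Fin (N - 1) → ℝ) (k : ℕ) (hk : k < N - 1) :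
    ((1 - Umat N β δ θ) *ᵥ v) ⟨k, hk⟩ =
      aa β δ θ * pp N k *
        ((Vext N v (k+1) - Vext N v (k+2)) + rr β δ θ * (Vext N v (k+1) - Vext N v k)) := by
  set x := β * (θ + δ) with hx
  have expand : ∀ j : Fin (N - 1), Umat N β δ θ ⟨k, hk⟩ j * v j =
      (if (j : ℕ) = k + 1 then (pp N k / (1 + Real.exp (-x))) * v j else 0)
    + (if (j : ℕ) + 1 = k then (pp N k / (1 + Real.exp x)) * v j else 0)
    + (if (j : ℕ) = k then (1 - pp N k / (1 + Real.exp (-x)) - pp N k / (1 + Real.exp x)) * v j else 0) := by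
    intro j
    have hj := j.isLt
    simp only [Umat, Fin.ext_iff, pp]
    split_ifs <;> first | ring1 | (exfalso; omega)
  have hmv : ((1 - Umat N β δ θ) *ᵥ v) ⟨k, hk⟩
      = v ⟨k, hk⟩ - ∑ j : Fin (N-1), Umat N β δ θ ⟨k, hk⟩ j * v j := by
    rw [Matrix.sub_mulVec, Matrix.one_mulVec]
    rfl
  rw [hmv, Finset.sum_congr rfl (fun j _ => expand j), Finset.sum_add_distrib,
    Finset.sum_add_distrib, fin_sum_eq, fin_sum_eq', fin_sum_eq, dif_pos hk]
  have hV1 : Vext N v (k+1) = v ⟨k, hk⟩ := by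
    rw [Vext, dif_pos ⟨by omega, by omega⟩]
    rfl
  rw [hV1]
  rw [div_exp_neg, div_exp_pos]
  by_cases h2 : k + 1 < N - 1
  · rw [dif_pos h2]
    have : Vext N v (k+2) = v ⟨k+1, h2⟩ := by
      rw [Vext, dif_pos ⟨by omega, by omega⟩]
      rfl
    rw [this]
    by_cases h0 : 1 ≤ k
    · rw [dif_pos ⟨by omega, h0⟩]
      have : Vext N v k = v ⟨k-1, by omega⟩ := by
        rw [Vext, dif_pos ⟨h0, by omega⟩]
      rw [this]; ring
    · rw [dif_neg (by omega)]
      have : Vext N v k = 0 := by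
        rw [Vext, dif_neg (by omega)]
      rw [this]; ring
  · rw [dif_neg h2]
    have hV2 : Vext N v (k+2) = 0 := by
      rw [Vext, dif_neg (by omega)]
    rw [hV2]
    have h0 : 1 ≤ k := by omega
    rw [dif_pos ⟨by omega, h0⟩]
    have : Vext N v k = v ⟨k-1, by omega⟩ := by
      rw [Vext, dif_pos ⟨h0, by omega⟩]
    rw [this]; ring


noncomputable def ssr (r : ℝ) (m : ℕ) : ℝ := ∑ i ∈ Finset.range m, r ^ i

lemma ssr_pos {r : ℝ} (hr : 0 < r) {m : ℕ} (hm : 1 ≤ m) : 0 < ssr r m :=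
  Finset.sum_pos (fun i _ => pow_pos hr i) (by simp [Finset.nonempty_range_iff]; omega)

lemma ssr_eq {r : ℝ} (hr : r ≠ 1) (n : ℕ) : ssr r n = (1 - r ^ n) / (1 - r) := by
  rw [eq_div_iff (sub_ne_zero.mpr (Ne.symm hr)), ssr]
  linear_combination (-1 : ℝ) * geom_sum_mul r n

lemma pairkey (r : ℝ) (hr : r ≠ 1) (u t : ℕ) :
    ((1 - r ^ (2*u+t+1)) * ssr r (u+1) + ssr r (2*u+t+2) * r ^ u)
      - ((1 - r ^ (2*u+t+1)) * ssr r (u+t+1) + ssr r (2*u+t+2) * r ^ (u+t))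
    = (1 - r) * r ^ u * ssr r t := by
  have h1r : (1:ℝ) - r ≠ 0 := sub_ne_zero.mpr (Ne.symm hr)
  rw [ssr_eq hr, ssr_eq hr, ssr_eq hr, ssr_eq hr]
  field_simp
  ring

lemma det_ne (N : ℕ) (β δ θ : ℝ) (hN : 3 ≤ N) : (1 - Umat N β δ θ).det ≠ 0 := by
  intro hdet
  obtain ⟨v, hv0, hv⟩ := (Matrix.exists_mulVec_eq_zero_iff).mpr hdet
  set r := rr β δ θ with hrdef
  set V := Vext N v with hVdef
  have hrec : ∀ k, k < N - 1 → (V (k+1) - V (k+2)) + r * (V (k+1) - V k) = 0 := by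
    intro k hk
    have h := congrFun hv ⟨k, hk⟩
    rw [key N β δ θ hN v k hk] at h
    have hne : aa β δ θ * pp N k ≠ 0 := ne_of_gt (mul_pos (aa_pos β δ θ) (pp_pos hN hk))
    have := mul_eq_zero.mp h
    tauto
  have hgeo : ∀ m, m ≤ N - 1 → V m - V (m+1) = r ^ m * (V 0 - V 1) := by
    intro m
    induction m with
    | zero => intro _; simp
    | succ n ih =>
      intro h
      have h1 := hrec n (by omega)
      have h2 := ih (by omega)
      have h3 : V (n+1) - V (n+2) = r * (V n - V (n+1)) := by linarith
      rw [h3, h2, pow_succ]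
      ring
  have hV0 : V 0 = 0 := by rw [hVdef, Vext, dif_neg (by omega)]
  have hVN : V N = 0 := by rw [hVdef, Vext, dif_neg (by omega)]
  have htel : ∑ m ∈ Finset.range N, (V m - V (m+1)) = V 0 - V N := Finset.sum_range_sub' V N
  have hsum : ssr r N * (V 0 - V 1) = 0 := by
    rw [ssr, Finset.sum_mul]
    rw [Finset.sum_congr rfl (fun m hm => (hgeo m (by
      have := Finset.mem_range.mp hm; omega)).symm)]
    rw [htel, hV0, hVN, sub_zero]
  have hs : (0:ℝ) < ssr r N := ssr_pos (rr_pos β δ θ) (by omega)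
  have h01 : V 0 - V 1 = 0 := by
    rcases mul_eq_zero.mp hsum with h | h
    · exact absurd h (ne_of_gt hs)
    · exact h
  have hzero : ∀ m, m ≤ N → V m = 0 := by
    intro m
    induction m with
    | zero => intro _; exact hV0
    | succ n ih =>
      intro h
      have := hgeo n (by omega)
      rw [h01, mul_zero] at this
      have := ih (by omega)
      linarith [hgeo n (by omega), ih (by omega)]
  apply hv0
  funext j
  have hj := j.isLt
  have : v j = V ((j : ℕ) + 1) := by
    rw [hVdef, Vext, dif_pos ⟨by omega, by omega⟩]
    congr 1
  rw [this]
  have := hzero ((j:ℕ)+1) (by omega)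
  simp [this]


noncomputable def gg (N : ℕ) (β δ θ : ℝ) (m : ℕ) : ℝ :=
  ((2*(m:ℝ) - (N:ℝ)) * (N:ℝ)^2) / (aa β δ θ * ((m:ℝ) * ((N:ℝ) - (m:ℝ))))

noncomputable def dd0 (N : ℕ) (β δ θ : ℝ) : ℝ :=
  -(∑ k ∈ Finset.range (N-1), gg N β δ θ (k+1) * ssr (rr β δ θ) (N-1-k)) / ssr (rr β δ θ) N

noncomputable def dd (N : ℕ) (β δ θ : ℝ) : ℕ → ℝ
  | 0 => dd0 N β δ θ
  | (k+1) => rr β δ θ * dd N β δ θ k + gg N β δ θ (k+1)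

lemma dd_closed (N : ℕ) (β δ θ : ℝ) :
    ∀ n, dd N β δ θ n = (rr β δ θ)^n * dd0 N β δ θ
      + ∑ k ∈ Finset.range n, (rr β δ θ)^(n-1-k) * gg N β δ θ (k+1) := by
  intro n
  induction n with
  | zero => simp [dd]
  | succ n ih =>
    have h1 : ∀ k ∈ Finset.range n, rr β δ θ ^ (n+1-1-k) * gg N β δ θ (k+1)
        = rr β δ θ * (rr β δ θ ^ (n-1-k) * gg N β δ θ (k+1)) := by
      intro k hk
      have hk' := Finset.mem_range.mp hk
      rw [← mul_assoc, ← pow_succ']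
      rw [show n + 1 - 1 - k = (n - 1 - k) + 1 from by omega, pow_succ']
    rw [show dd N β δ θ (n+1) = rr β δ θ * dd N β δ θ n + gg N β δ θ (n+1) from rfl, ih,
      Finset.sum_range_succ, Finset.sum_congr rfl h1,
      show n+1-1-n = 0 from by omega, pow_zero, mul_add, Finset.mul_sum, pow_succ']
    ring

lemma sum_swap_aux (f : ℕ → ℕ → ℝ) :
    ∀ n, ∑ m ∈ Finset.range n, ∑ k ∈ Finset.range m, f m k
      = ∑ k ∈ Finset.range n, ∑ m ∈ Finset.Ico (k+1) n, f m k := by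
  intro n
  induction n with
  | zero => simp
  | succ n ih =>
    rw [Finset.sum_range_succ, ih, Finset.sum_range_succ
      (f := fun k => ∑ m ∈ Finset.Ico (k+1) (n+1), f m k)]
    rw [show (∑ m ∈ Finset.Ico (n+1) (n+1), f m n) = 0 by simp, add_zero,
      ← Finset.sum_add_distrib]
    refine Finset.sum_congr rfl fun k hk => ?_
    have hk' := Finset.mem_range.mp hk
    rw [Finset.sum_Ico_succ_top (by omega)]

lemma sum_dd (N : ℕ) (β δ θ : ℝ) (hN : 3 ≤ N) : ∑ m ∈ Finset.range N, dd N β δ θ m = 0 := by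
  set r := rr β δ θ with hrdef
  have hs : (0:ℝ) < ssr r N := ssr_pos (rr_pos β δ θ) (by omega)
  calc ∑ m ∈ Finset.range N, dd N β δ θ m
      = ∑ m ∈ Finset.range N, (r^m * dd0 N β δ θ
          + ∑ k ∈ Finset.range m, r^(m-1-k) * gg N β δ θ (k+1)) :=
        Finset.sum_congr rfl fun m _ => dd_closed N β δ θ m
    _ = ssr r N * dd0 N β δ θ
        + ∑ k ∈ Finset.range N, ∑ m ∈ Finset.Ico (k+1) N, r^(m-1-k) * gg N β δ θ (k+1) := by
        rw [Finset.sum_add_distrib, ← Finset.sum_mul, ← ssr, sum_swap_aux]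
    _ = ssr r N * dd0 N β δ θ
        + ∑ k ∈ Finset.range N, gg N β δ θ (k+1) * ssr r (N-1-k) := by
        congr 1
        refine Finset.sum_congr rfl fun k hk => ?_
        rw [Finset.sum_Ico_eq_sum_range, ssr, Finset.mul_sum]
        refine Finset.sum_congr (by congr 1; omega) fun i hi => ?_
        rw [mul_comm, show k + 1 + i - 1 - k = i from by omega]
    _ = ssr r N * dd0 N β δ θ
        + ∑ k ∈ Finset.range (N-1), gg N β δ θ (k+1) * ssr r (N-1-k) := by
        congr 1
        refine (Finset.sum_subset (Finset.range_subset_range.mpr (by omega)) fun k _ hk => ?_).symm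
        have : N - 1 - k = 0 := by
          simp only [Finset.mem_range] at hk ⊢
          omega
        rw [this]
        simp [ssr]
    _ = 0 := by
        rw [dd0, hrdef]
        field_simp
        rw [div_self (show ssr (rr β δ θ) N ≠ 0 from ne_of_gt hs), neg_add_cancel, mul_zero]

noncomputable def wsol (N : ℕ) (β δ θ : ℝ) : Fin (N - 1) → ℝ :=
  fun j => -∑ m ∈ Finset.range ((j : ℕ) + 1), dd N β δ θ m

lemma Vw (N : ℕ) (β δ θ : ℝ) (hN : 3 ≤ N) :
    ∀ m, m ≤ N → Vext N (wsol N β δ θ) m = -∑ i ∈ Finset.range m, dd N β δ θ i := by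
  intro m hm
  rcases Nat.eq_zero_or_pos m with h0 | h1
  · subst h0
    rw [Vext, dif_neg (by omega)]
    simp
  · rcases Nat.lt_or_ge m N with hlt | hge
    · rw [Vext, dif_pos ⟨h1, by omega⟩]
      show -∑ i ∈ Finset.range (m-1+1), dd N β δ θ i = -∑ i ∈ Finset.range m, dd N β δ θ i
      rw [show m-1+1 = m from by omega]
    · have hmN : m = N := by omega
      rw [hmN, Vext, dif_neg (by omega), sum_dd N β δ θ hN]
      simp

lemma mul_wsol (N : ℕ) (β δ θ : ℝ) (hN : 3 ≤ N) :
    (1 - Umat N β δ θ) *ᵥ wsol N β δ θ = fun j : Fin (N-1) => 2*((j:ℕ)+1 : ℝ) - N := by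
  funext j
  obtain ⟨k, hk⟩ := j
  rw [key N β δ θ hN (wsol N β δ θ) k hk]
  rw [Vw N β δ θ hN (k+1) (by omega), Vw N β δ θ hN (k+2) (by omega),
    Vw N β δ θ hN k (by omega)]
  rw [Finset.sum_range_succ (n := k+1), Finset.sum_range_succ (n := k)]
  have hred : aa β δ θ * pp N k * gg N β δ θ (k+1) = 2*((k:ℝ)+1) - N := by
    rw [pp, gg]
    have hN0 : ((N:ℝ)) ≠ 0 := by positivity
    have haa : aa β δ θ ≠ 0 := ne_of_gt (aa_pos β δ θ)
    have hk1 : ((k:ℝ)+1) ≠ 0 := by positivity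
    have hNk : (N:ℝ) - ((k:ℝ)+1) ≠ 0 := by
      have : (k:ℕ) + 1 < N := by omega
      have : ((k:ℕ):ℝ) + 1 < (N:ℝ) := by exact_mod_cast this
      linarith
    push_cast
    field_simp
  rw [show dd N β δ θ (k+1) = rr β δ θ * dd N β δ θ k + gg N β δ θ (k+1) from rfl] at *
  simp only [Fin.val_mk]
  rw [← hred]
  ring


noncomputable def Hh (N : ℕ) (β δ θ : ℝ) (k : ℕ) : ℝ :=
  (1 - (rr β δ θ)^(N-1)) * ssr (rr β δ θ) (N-1-k) + ssr (rr β δ θ) N * (rr β δ θ)^(N-2-k)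

lemma g_reflect (N : ℕ) (β δ θ : ℝ) (hN : 3 ≤ N) (m : ℕ) (h1 : 1 ≤ m) (h2 : m ≤ N - 1) :
    gg N β δ θ (N - m) = - gg N β δ θ m := by
  unfold gg
  rw [Nat.cast_sub (show m ≤ N by omega)]
  rw [show (2*((N:ℝ) - m) - N) * (N:ℝ)^2 = -((2*(m:ℝ) - N) * (N:ℝ)^2) from by ring,
    show aa β δ θ * (((N:ℝ) - m) * ((N:ℝ) - ((N:ℝ) - m))) = aa β δ θ * ((m:ℝ) * ((N:ℝ) - m)) from by ring,
    neg_div]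

lemma Hh_pair (N : ℕ) (β δ θ : ℝ) (hN : 3 ≤ N) (hrne : rr β δ θ ≠ 1) (k : ℕ)
    (hk : k < N - 1) (hgt : N < 2*(k+1)) :
    Hh N β δ θ k - Hh N β δ θ (N-2-k)
      = (1 - rr β δ θ) * (rr β δ θ)^(N-2-k) * ssr (rr β δ θ) (2*(k+1)-N) := by
  unfold Hh
  obtain ⟨u, hu⟩ : ∃ u, N-2-k = u := ⟨_, rfl⟩
  obtain ⟨t, ht⟩ : ∃ t, 2*(k+1)-N = t := ⟨_, rfl⟩
  rw [hu, ht, show N-1-k = u+1 from by omega, show N-1-u = u+t+1 from by omega,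
    show N-2-u = u+t from by omega, show N-1 = 2*u+t+1 from by omega,
    show N = 2*u+t+2 from by omega]
  exact pairkey (rr β δ θ) hrne u t

lemma TsN (N : ℕ) (β δ θ : ℝ) (hN : 3 ≤ N) :
    (dd N β δ θ (N-1) - dd N β δ θ 0) * ssr (rr β δ θ) N
      = ∑ k ∈ Finset.range (N-1), gg N β δ θ (k+1) * Hh N β δ θ k := by
  have hs : ssr (rr β δ θ) N ≠ 0 := ne_of_gt (ssr_pos (rr_pos β δ θ) (by omega))
  have hd0 : dd0 N β δ θ * ssr (rr β δ θ) N
      = -∑ k ∈ Finset.range (N-1), gg N β δ θ (k+1) * ssr (rr β δ θ) (N-1-k) := by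
    rw [dd0, div_mul_cancel₀ _ hs]
  have expand : ∀ k ∈ Finset.range (N-1), gg N β δ θ (k+1) * Hh N β δ θ k
      = (1 - (rr β δ θ)^(N-1)) * (gg N β δ θ (k+1) * ssr (rr β δ θ) (N-1-k))
        + ((rr β δ θ)^(N-1-1-k) * gg N β δ θ (k+1)) * ssr (rr β δ θ) N := by
    intro k hk
    rw [Hh, show N-2-k = N-1-1-k from by omega]
    ring
  rw [Finset.sum_congr rfl expand, Finset.sum_add_distrib, ← Finset.mul_sum, ← Finset.sum_mul]
  rw [dd_closed N β δ θ (N-1), show dd N β δ θ 0 = dd0 N β δ θ from rfl]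
  linear_combination ((rr β δ θ)^(N-1) - 1) * hd0

lemma Tpos (N : ℕ) (β δ θ : ℝ) (hN : 3 ≤ N) (hx : 0 < β * (θ + δ)) :
    0 < dd N β δ θ (N-1) - dd N β δ θ 0 := by
  have hr0 : 0 < rr β δ θ := rr_pos β δ θ
  have hrlt : rr β δ θ < 1 := by
    rw [rr, ← Real.exp_zero]
    exact Real.exp_lt_exp.mpr (by linarith)
  have hrne : rr β δ θ ≠ 1 := ne_of_lt hrlt
  have hs : 0 < ssr (rr β δ θ) N := ssr_pos hr0 (by omega)
  have hggpos : ∀ m : ℕ, 1 ≤ m → m ≤ N - 1 → N < 2*m → 0 < gg N β δ θ m := by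
    intro m hm1 hm2 hm3
    rw [gg]
    apply div_pos
    · have h1 : (N:ℝ) < 2*(m:ℝ) := by exact_mod_cast hm3
      have hN0 : (0:ℝ) < (N:ℝ)^2 := by positivity
      exact mul_pos (by linarith) hN0
    · have h1 : (0:ℝ) < (m:ℝ) := by positivity
      have h2 : (0:ℝ) < (N:ℝ) - (m:ℝ) := by
        have : (m:ℕ) < N := by omega
        have : ((m:ℕ):ℝ) < (N:ℝ) := by exact_mod_cast this
        linarith
      exact mul_pos (aa_pos β δ θ) (mul_pos h1 h2)
  have hggneg : ∀ m : ℕ, 1 ≤ m → m ≤ N - 1 → 2*m < N → gg N β δ θ m < 0 := by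
    intro m hm1 hm2 hm3
    rw [gg]
    apply div_neg_of_neg_of_pos
    · have h1 : 2*(m:ℝ) < (N:ℝ) := by exact_mod_cast hm3
      have hN0 : (0:ℝ) < (N:ℝ)^2 := by positivity
      exact mul_neg_of_neg_of_pos (by linarith) hN0
    · have h1 : (0:ℝ) < (m:ℝ) := by positivity
      have h2 : (0:ℝ) < (N:ℝ) - (m:ℝ) := by
        have : (m:ℕ) < N := by omega
        have : ((m:ℕ):ℝ) < (N:ℝ) := by exact_mod_cast this
        linarith
      exact mul_pos (aa_pos β δ θ) (mul_pos h1 h2)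
  have hgg0 : ∀ m : ℕ, 2*m = N → gg N β δ θ m = 0 := by
    intro m hm
    rw [gg, show 2*(m:ℝ) - (N:ℝ) = 0 from by
      have : 2*((m:ℕ):ℝ) = ((N:ℕ):ℝ) := by exact_mod_cast congrArg (Nat.cast (R := ℝ)) hm
      linarith]
    simp
  -- the paired term is nonneg
  have hterm : ∀ k ∈ Finset.range (N-1),
      0 ≤ gg N β δ θ (k+1) * (Hh N β δ θ k - Hh N β δ θ (N-2-k)) := by
    intro k hk
    have hk' := Finset.mem_range.mp hk
    rcases lt_trichotomy (2*(k+1)) N with hlt | heq | hgt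
    · have hg := hggneg (k+1) (by omega) (by omega) hlt
      have hpair := Hh_pair N β δ θ hN hrne (N-2-k) (by omega) (by omega)
      rw [show N-2-(N-2-k) = k from by omega] at hpair
      have hposs : 0 < (1 - rr β δ θ) * (rr β δ θ)^(N-2-(N-2-k)) * ssr (rr β δ θ) (2*(N-2-k+1)-N) := by
        apply mul_pos (mul_pos (by linarith) (pow_pos hr0 _))
        exact ssr_pos hr0 (by omega)
      rw [show N-2-(N-2-k) = k from by omega] at hposs
      have : Hh N β δ θ k - Hh N β δ θ (N-2-k) < 0 := by linarith
      exact le_of_lt (mul_pos_of_neg_of_neg hg this)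
    · rw [hgg0 (k+1) heq, zero_mul]
    · have hg := hggpos (k+1) (by omega) (by omega) hgt
      have hpair := Hh_pair N β δ θ hN hrne k hk' hgt
      have hposs : 0 < (1 - rr β δ θ) * (rr β δ θ)^(N-2-k) * ssr (rr β δ θ) (2*(k+1)-N) := by
        apply mul_pos (mul_pos (by linarith) (pow_pos hr0 _))
        exact ssr_pos hr0 (by omega)
      exact le_of_lt (mul_pos hg (by linarith))
  have hstrict : 0 < gg N β δ θ (N-2+1) * (Hh N β δ θ (N-2) - Hh N β δ θ (N-2-(N-2))) := by
    have hg := hggpos (N-2+1) (by omega) (by omega) (by omega)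
    have hpair := Hh_pair N β δ θ hN hrne (N-2) (by omega) (by omega)
    have hposs : 0 < (1 - rr β δ θ) * (rr β δ θ)^(N-2-(N-2)) * ssr (rr β δ θ) (2*(N-2+1)-N) := by
      apply mul_pos (mul_pos (by linarith) (pow_pos hr0 _))
      exact ssr_pos hr0 (by omega)
    exact mul_pos hg (by linarith)
  have hsumpos : 0 < ∑ k ∈ Finset.range (N-1),
      gg N β δ θ (k+1) * (Hh N β δ θ k - Hh N β δ θ (N-2-k)) := by
    apply Finset.sum_pos' hterm
    refine ⟨N-2, Finset.mem_range.mpr (by omega), ?_⟩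
    rw [show N-2-(N-2) = 0 from by omega] at hstrict ⊢
    exact hstrict
  -- 2 * (T * sN) equals that sum
  have hrefl : ∑ k ∈ Finset.range (N-1), gg N β δ θ (k+1) * Hh N β δ θ k
      = ∑ k ∈ Finset.range (N-1), gg N β δ θ (N-2-k+1) * Hh N β δ θ (N-2-k) := by
    rw [← Finset.sum_range_reflect (fun k => gg N β δ θ (k+1) * Hh N β δ θ k) (N-1)]
    exact Finset.sum_congr rfl fun k hk => by rw [show N-1-1-k = N-2-k from by omega]
  have hcomb : 2 * ((dd N β δ θ (N-1) - dd N β δ θ 0) * ssr (rr β δ θ) N)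
      = ∑ k ∈ Finset.range (N-1),
          gg N β δ θ (k+1) * (Hh N β δ θ k - Hh N β δ θ (N-2-k)) := by
    rw [two_mul, TsN N β δ θ hN]
    nth_rewrite 2 [hrefl]
    rw [← Finset.sum_add_distrib]
    refine Finset.sum_congr rfl fun k hk => ?_
    have hk' := Finset.mem_range.mp hk
    have : gg N β δ θ (N-2-k+1) = - gg N β δ θ (k+1) := by
      rw [show N-2-k+1 = N-(k+1) from by omega]
      exact g_reflect N β δ θ hN (k+1) (by omega) (by omega)
    rw [this]
    ring
  nlinarith [hs, hsumpos, hcomb]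


lemma main_gt (N : ℕ) (β δ θ : ℝ) (hN : 3 ≤ N) (hx : 0 < β * (θ + δ)) (hθ : 0 < θ) :
    Epunish N β δ θ < Ereward N β δ θ := by
  have hdet := det_ne N β δ θ hN
  have hsolve : fund N β δ θ *ᵥ (fun j : Fin (N-1) => 2*((j:ℕ)+1 : ℝ) - N) = wsol N β δ θ := by
    rw [← mul_wsol N β δ θ hN, fund, Matrix.mulVec_mulVec, Matrix.nonsing_inv_mul _ (Ne.isUnit hdet),
      Matrix.one_mulVec]
  rw [Ereward, Epunish, dif_pos hN, dif_pos hN, ← sub_pos, ← mul_sub, ← Finset.sum_sub_distrib]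
  have hkey : ∑ j : Fin (N-1),
      ((fund N β δ θ ⟨0, by omega⟩ j + fund N β δ θ ⟨N-2, by omega⟩ j) * ((j:ℕ)+1 : ℝ)
       - (fund N β δ θ ⟨0, by omega⟩ j + fund N β δ θ ⟨N-2, by omega⟩ j) * ((N:ℝ) - ((j:ℕ)+1:ℝ)))
      = wsol N β δ θ ⟨0, by omega⟩ + wsol N β δ θ ⟨N-2, by omega⟩ := by
    rw [← hsolve]
    simp only [Matrix.mulVec, dotProduct]
    rw [← Finset.sum_add_distrib]
    exact Finset.sum_congr rfl fun j _ => by ring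
  rw [hkey]
  have h1 : wsol N β δ θ ⟨0, by omega⟩ = -dd N β δ θ 0 := by
    show -∑ m ∈ Finset.range 1, dd N β δ θ m = _
    rw [Finset.sum_range_one]
  have h2 : wsol N β δ θ ⟨N-2, by omega⟩ = dd N β δ θ (N-1) := by
    have h0 : ∑ m ∈ Finset.range N, dd N β δ θ m = 0 := sum_dd N β δ θ hN
    have hsplit := Finset.sum_range_succ (dd N β δ θ) (N-1)
    rw [show N-1+1 = N from by omega] at hsplit
    show -∑ m ∈ Finset.range (N-2+1), dd N β δ θ m = dd N β δ θ (N-1)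
    rw [show N-2+1 = N-1 from by omega]
    linarith
  rw [h1, h2]
  have := Tpos N β δ θ hN hx
  have hθ2 : 0 < θ/2 := by linarith
  nlinarith


lemma hrev (N : ℕ) (i : Fin (N-1)) : ((Fin.revPerm i : Fin (N-1)) : ℕ) = N - 2 - (i : ℕ) := by
  simp only [Fin.revPerm_apply, Fin.val_rev]
  omega

lemma Umat_reflect (N : ℕ) (β δ θ : ℝ) (hN : 3 ≤ N) :
    Umat N β δ θ = (Umat N β (-2*θ - δ) θ).submatrix Fin.revPerm Fin.revPerm := by
  have hc : ∀ i : Fin (N-1), ((N - 2 - (i:ℕ) : ℕ) : ℝ) = (N:ℝ) - 2 - ((i:ℕ):ℝ) := by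
    intro i
    have := i.isLt
    rw [Nat.cast_sub (by omega), Nat.cast_sub (by omega)]
    push_cast
    ring
  have hpx : Real.exp (-(β * (θ + (-2*θ - δ)))) = Real.exp (β * (θ + δ)) := by
    congr 1; ring
  have hpx2 : Real.exp (β * (θ + (-2*θ - δ))) = Real.exp (-(β * (θ + δ))) := by
    congr 1; ring
  funext i j
  have hi := i.isLt
  have hj := j.isLt
  simp only [Matrix.submatrix_apply, Umat, Fin.ext_iff, hrev, hpx, hpx2, hc]
  split_ifs <;> first | ring1 | (exfalso; omega)

lemma fund_reflect (N : ℕ) (β δ θ : ℝ) (hN : 3 ≤ N) :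
    fund N β δ θ = (fund N β (-2*θ - δ) θ).submatrix Fin.revPerm Fin.revPerm := by
  rw [fund, fund, Umat_reflect N β δ θ hN]
  have h1 : (1 : Matrix (Fin (N-1)) (Fin (N-1)) ℝ)
        - (Umat N β (-2*θ - δ) θ).submatrix Fin.revPerm Fin.revPerm
      = (1 - Umat N β (-2*θ - δ) θ).submatrix Fin.revPerm Fin.revPerm := by
    ext i j
    simp only [Matrix.sub_apply, Matrix.submatrix_apply, Matrix.one_apply,
      EmbeddingLike.apply_eq_iff_eq]
  rw [h1, Matrix.inv_submatrix_equiv]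

set_option maxHeartbeats 1000000 in
lemma reflect (N : ℕ) (β δ θ : ℝ) (hN : 3 ≤ N) :
    Epunish N β δ θ = Ereward N β (-2*θ - δ) θ := by
  rw [Epunish, Ereward, dif_pos hN, dif_pos hN]
  congr 1
  rw [fund_reflect N β δ θ hN]
  simp only [Matrix.submatrix_apply]
  have e0 : (Fin.revPerm (⟨0, by omega⟩ : Fin (N-1))) = ⟨N-2, by omega⟩ := by
    apply Fin.ext
    rw [hrev]
    show N - 2 - 0 = N - 2
    omega
  have eL : (Fin.revPerm (⟨N-2, by omega⟩ : Fin (N-1))) = ⟨0, by omega⟩ := by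
    apply Fin.ext
    rw [hrev]
    show N - 2 - (N-2) = 0
    omega
  rw [e0, eL]
  refine Fintype.sum_equiv Fin.revPerm _ _ fun x => ?_
  have hx := x.isLt
  have hvx : ((Fin.revPerm x : Fin (N-1)) : ℕ) = N - 2 - (x:ℕ) := hrev N x
  have hcast : (((Fin.revPerm x : Fin (N-1)) : ℕ) : ℝ) = (N:ℝ) - 2 - ((x:ℕ):ℝ) := by
    rw [hvx, Nat.cast_sub (by omega), Nat.cast_sub (by omega)]
    push_cast
    ring
  rw [hcast]
  ring

end RVP

/-- For every integer N ≥ 3, all real β > 0, δ ∈ ℝ and θ > 0: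
E_r(θ) < E_p(θ) if θ < −δ; E_r(θ) = E_p(θ) if θ = −δ; and E_r(θ) > E_p(θ) if θ > −δ. -/
theorem reward_vs_punishment_cost (N : ℕ) (hN : 3 ≤ N) (β δ θ : ℝ) (hβ : 0 < β)
    (hθ : 0 < θ) :
    (θ < -δ → Ereward N β δ θ < Epunish N β δ θ) ∧
    (θ = -δ → Ereward N β δ θ = Epunish N β δ θ) ∧
    (θ > -δ → Ereward N β δ θ > Epunish N β δ θ) := by
  refine ⟨?_, ?_, ?_⟩
  · intro h
    have hx' : 0 < β * (θ + (-2*θ - δ)) := mul_pos hβ (by linarith)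
    have hmain := RVP.main_gt N β (-2*θ - δ) θ hN hx' hθ
    have hA : Epunish N β δ θ = Ereward N β (-2*θ - δ) θ := RVP.reflect N β δ θ hN
    have hB : Epunish N β (-2*θ - δ) θ = Ereward N β δ θ := by
      have := RVP.reflect N β (-2*θ - δ) θ hN
      rw [show -2*θ - (-2*θ - δ) = δ from by ring] at this
      exact this
    rw [← hB, hA]
    exact hmain
  · intro h
    have h2 : -2*θ - δ = δ := by rw [h]; ring
    have := RVP.reflect N β δ θ hN
    rw [h2] at this
    exact this.symm
  · intro h
    exact RVP.main_gt N β δ θ hN (mul_pos hβ (by linarith)) hθ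
end

section
/- For every integer N ≥ 3, every β > 0 and every δ ∈ ℝ, if θ = −δ (so that x = 0), then E_r(θ) = E_p(θ) = N²·θ·H_N; in particular this value does not depend on β. -/
open Real Finset Filter Topology Matrix

/-! ### Auxiliary development -/

/-- The drift coefficient `p_i = i(N-i)/N²` at state `i+1` (index `i`). -/
noncomputable def pcoef (N i : ℕ) : ℝ := ((i:ℝ) + 1) * ((N:ℝ) - ((i:ℝ)+1)) / (N:ℝ)^2

/-- At `θ = -δ`, i.e. `x = 0`, the transition matrix simplifies. -/
lemma Umat_neutral (N : ℕ) (β δ : ℝ) (i j : Fin (N-1)) :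
    Umat N β δ (-δ) i j =
      if (j : ℕ) = (i : ℕ) + 1 then pcoef N i / 2
      else if (j : ℕ) + 1 = (i : ℕ) then pcoef N i / 2
      else if j = i then 1 - pcoef N i
      else 0 := by
  have hx : β * (-δ + δ) = 0 := by ring
  simp only [Umat, pcoef, hx, neg_zero, Real.exp_zero]
  norm_num
  split_ifs <;> ring

/-- Green function of the symmetric walk: expected visits to state `j+1` started from `s`. -/
noncomputable def Gfun (N j s : ℕ) : ℝ :=
  2 * N * (min s (j+1) : ℕ) * ((N:ℝ) - (max s (j+1) : ℕ)) / ((j+1) * ((N:ℝ) - (j+1)))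

lemma Gfun_zero (N j : ℕ) : Gfun N j 0 = 0 := by simp [Gfun]

lemma Gfun_top (N j : ℕ) (h : j + 1 ≤ N) : Gfun N j N = 0 := by
  have : max N (j+1) = N := max_eq_left h
  simp [Gfun, this]

/-- Discrete Laplacian identity for the Green function. -/
lemma laplace (N i j : ℕ) (hN : 3 ≤ N) (hi1 : 1 ≤ i) (hi2 : i ≤ N - 1) (hj : j ≤ N - 2) :
    Gfun N j i - (Gfun N j (i-1) + Gfun N j (i+1)) / 2
      = if i = j + 1 then (N:ℝ)^2 / ((j+1) * ((N:ℝ) - (j+1))) else 0 := by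
  have hm0 : ((j:ℝ)+1) ≠ 0 := by positivity
  have hmN : (N:ℝ) - ((j:ℝ)+1) ≠ 0 := by
    have : (j:ℝ)+1 < N := by exact_mod_cast (by omega : j + 1 < N)
    linarith
  rcases lt_trichotomy i (j+1) with h | h | h
  · rw [if_neg (by omega)]
    have e1 : min i (j+1) = i := min_eq_left (by omega)
    have e2 : min (i-1) (j+1) = i-1 := min_eq_left (by omega)
    have e3 : min (i+1) (j+1) = i+1 := min_eq_left (by omega)
    have f1 : max i (j+1) = j+1 := max_eq_right (by omega)
    have f2 : max (i-1) (j+1) = j+1 := max_eq_right (by omega)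
    have f3 : max (i+1) (j+1) = j+1 := max_eq_right (by omega)
    simp only [Gfun, e1, e2, e3, f1, f2, f3]
    rw [Nat.cast_sub hi1]
    push_cast
    field_simp
    ring
  · rw [if_pos h]
    have e2 : min (i-1) (j+1) = i-1 := min_eq_left (by omega)
    have e1 : min i (j+1) = j+1 := min_eq_right (by omega)
    have e3 : min (i+1) (j+1) = j+1 := min_eq_right (by omega)
    have f2 : max (i-1) (j+1) = j+1 := max_eq_right (by omega)
    have f1 : max i (j+1) = j+1 := max_eq_right (by omega)
    have f3 : max (i+1) (j+1) = i+1 := max_eq_left (by omega)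
    simp only [Gfun, e1, e2, e3, f1, f2, f3]
    rw [Nat.cast_sub hi1]
    have hic : (i:ℝ) = (j:ℝ) + 1 := by exact_mod_cast congrArg (Nat.cast (R := ℝ)) h
    push_cast
    rw [hic]
    field_simp
    ring
  · rw [if_neg (by omega)]
    have e1 : min i (j+1) = j+1 := min_eq_right (by omega)
    have e2 : min (i-1) (j+1) = j+1 := min_eq_right (by omega)
    have e3 : min (i+1) (j+1) = j+1 := min_eq_right (by omega)
    have f1 : max i (j+1) = i := max_eq_left (by omega)
    have f2 : max (i-1) (j+1) = i-1 := max_eq_left (by omega)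
    have f3 : max (i+1) (j+1) = i+1 := max_eq_left (by omega)
    simp only [Gfun, e1, e2, e3, f1, f2, f3]
    rw [Nat.cast_sub hi1]
    push_cast
    field_simp
    ring

/-- The explicit fundamental matrix. -/
noncomputable def Mfund (N : ℕ) : Matrix (Fin (N-1)) (Fin (N-1)) ℝ :=
  fun k j => Gfun N j ((k:ℕ)+1)

lemma sum_ite_nat_val {n : ℕ} (m : ℕ) (f : Fin n → ℝ) :
    (∑ k : Fin n, if (k:ℕ) = m then f k else 0) = if h : m < n then f ⟨m, h⟩ else 0 := by
  split_ifs with h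
  · rw [Finset.sum_eq_single (⟨m, h⟩ : Fin n)]
    · simp
    · intro b _ hb
      rw [if_neg]
      intro hc; exact hb (Fin.ext hc)
    · simp
  · apply Finset.sum_eq_zero
    intro k _
    rw [if_neg]
    intro hc; exact h (hc ▸ k.isLt)

lemma right_inv (N : ℕ) (hN : 3 ≤ N) (β δ : ℝ) :
    (1 - Umat N β δ (-δ)) * Mfund N = 1 := by
  ext i j
  rw [Matrix.mul_apply]
  have hsplit : ∀ k : Fin (N-1),
      (1 - Umat N β δ (-δ)) i k * Mfund N k j =
        (if (k:ℕ) = (i:ℕ) then (1 : ℝ) * Mfund N k j else 0)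
      + (-((if (k:ℕ) = (i:ℕ)+1 then (pcoef N i / 2) * Mfund N k j else 0)
         + (if (k:ℕ) = (i:ℕ)-1 ∧ 1 ≤ (i:ℕ) then (pcoef N i / 2) * Mfund N k j else 0)
         + (if (k:ℕ) = (i:ℕ) then (1 - pcoef N i) * Mfund N k j else 0))) := by
    intro k
    rw [Matrix.sub_apply, Matrix.one_apply, Umat_neutral]
    simp only [Fin.ext_iff]
    split_ifs <;> first | ring1 | (exfalso; omega)
  rw [Finset.sum_congr rfl (fun k _ => hsplit k)]
  rw [Finset.sum_add_distrib, Finset.sum_neg_distrib]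
  rw [Finset.sum_add_distrib, Finset.sum_add_distrib]
  rw [sum_ite_nat_val, sum_ite_nat_val, sum_ite_nat_val]
  have hsum3 : (∑ k : Fin (N-1), if (k:ℕ) = (i:ℕ)-1 ∧ 1 ≤ (i:ℕ)
      then (pcoef N i / 2) * Mfund N k j else 0)
      = (pcoef N i / 2) * Gfun N j (i:ℕ) := by
    by_cases hi : 1 ≤ (i:ℕ)
    · have : (∑ k : Fin (N-1), if (k:ℕ) = (i:ℕ)-1 ∧ 1 ≤ (i:ℕ)
          then (pcoef N i / 2) * Mfund N k j else 0)
          = ∑ k : Fin (N-1), if (k:ℕ) = (i:ℕ)-1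
          then (pcoef N i / 2) * Mfund N k j else 0 := by
        apply Finset.sum_congr rfl; intro k _
        simp [hi]
      rw [this, sum_ite_nat_val, dif_pos (by omega : (i:ℕ)-1 < N-1)]
      simp only [Mfund]
      congr 2
      omega
    · have h0 : (i:ℕ) = 0 := by omega
      rw [h0, Gfun_zero, mul_zero]
      apply Finset.sum_eq_zero
      intro k _
      rw [if_neg (by omega)]
  rw [hsum3]
  have hiv := i.isLt
  have e0 : (if h : (i:ℕ) < N-1 then (1:ℝ) * Mfund N ⟨(i:ℕ), h⟩ j else 0)
      = (1:ℝ) * Gfun N j ((i:ℕ)+1) := by rw [dif_pos hiv]; rfl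
  have e4 : (if h : (i:ℕ) < N-1 then (1 - pcoef N i) * Mfund N ⟨(i:ℕ), h⟩ j else 0)
      = (1 - pcoef N i) * Gfun N j ((i:ℕ)+1) := by rw [dif_pos hiv]; rfl
  have hterm2 : (if h : (i:ℕ)+1 < N-1 then (pcoef N i / 2) * Mfund N ⟨(i:ℕ)+1, h⟩ j else 0)
      = (pcoef N i / 2) * Gfun N j ((i:ℕ)+1+1) := by
    by_cases h : (i:ℕ)+1 < N-1
    · rw [dif_pos h]; rfl
    · rw [dif_neg h]
      have hNe : (i:ℕ)+1+1 = N := by omega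
      rw [hNe, Gfun_top N j (by omega : (j:ℕ)+1 ≤ N)]
      ring
  rw [e0, e4, hterm2]
  have key := laplace N ((i:ℕ)+1) (j:ℕ) hN (by omega) (by omega) (by omega)
  simp only [Nat.add_sub_cancel] at key
  have expand : (1:ℝ) * Gfun N j ((i:ℕ)+1) +
      -((pcoef N i / 2) * Gfun N j ((i:ℕ)+1+1) + (pcoef N i / 2) * Gfun N j (i:ℕ)
        + (1 - pcoef N i) * Gfun N j ((i:ℕ)+1))
      = pcoef N i * (Gfun N j ((i:ℕ)+1) - (Gfun N j (i:ℕ) + Gfun N j ((i:ℕ)+1+1))/2) := by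
    ring
  rw [expand, key]
  rw [Matrix.one_apply]
  by_cases hij : i = j
  · have hv : (i:ℕ) = (j:ℕ) := by rw [hij]
    rw [if_pos (by omega : (i:ℕ)+1 = (j:ℕ)+1), if_pos hij]
    have hj1 : ((j:ℕ):ℝ)+1 ≠ 0 := by positivity
    have hjN : (N:ℝ) - (((j:ℕ):ℝ)+1) ≠ 0 := by
      have : ((j:ℕ):ℝ)+1 < N := by exact_mod_cast (by omega : (j:ℕ) + 1 < N)
      linarith
    have hN0 : (N:ℝ) ≠ 0 := by positivity
    have hv' : ((i:ℕ):ℝ) = ((j:ℕ):ℝ) := by exact_mod_cast hv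
    rw [pcoef, hv']
    field_simp
  · rw [if_neg (by intro hc; exact hij (Fin.ext (by omega))), if_neg hij]
    ring

lemma fund_neutral (N : ℕ) (hN : 3 ≤ N) (β δ : ℝ) :
    fund N β δ (-δ) = Mfund N :=
  Matrix.inv_eq_right_inv (right_inv N hN β δ)

lemma Gfun_one (N j : ℕ) (hN : 3 ≤ N) (hj : j ≤ N - 2) :
    Gfun N j 1 = 2 * N / ((j:ℝ)+1) := by
  have e1 : min 1 (j+1) = 1 := min_eq_left (by omega)
  have f1 : max 1 (j+1) = j+1 := max_eq_right (by omega)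
  have hjN : (N:ℝ) - ((j:ℝ)+1) ≠ 0 := by
    have : (j:ℝ)+1 < N := by exact_mod_cast (by omega : j + 1 < N)
    linarith
  have hj1 : ((j:ℝ)+1) ≠ 0 := by positivity
  simp only [Gfun, e1, f1]
  push_cast
  field_simp

lemma Gfun_penult (N j : ℕ) (hN : 3 ≤ N) (hj : j ≤ N - 2) :
    Gfun N j (N-1) = 2 * N / ((N:ℝ) - ((j:ℝ)+1)) := by
  have e1 : min (N-1) (j+1) = j+1 := min_eq_right (by omega)
  have f1 : max (N-1) (j+1) = N-1 := max_eq_left (by omega)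
  have hjN : (N:ℝ) - ((j:ℝ)+1) ≠ 0 := by
    have : (j:ℝ)+1 < N := by exact_mod_cast (by omega : j + 1 < N)
    linarith
  have hj1 : ((j:ℝ)+1) ≠ 0 := by positivity
  have hc : ((N - 1 : ℕ) : ℝ) = (N:ℝ) - 1 := by
    push_cast [Nat.cast_sub (by omega : 1 ≤ N)]; ring
  simp only [Gfun, e1, f1, hc]
  push_cast
  field_simp
  ring

lemma sum_inv_reflect (N : ℕ) (hN : 3 ≤ N) :
    ∑ j : Fin (N-1), 1 / ((N:ℝ) - ((j:ℕ)+1)) = harmonicNum N := by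
  rw [Fin.sum_univ_eq_sum_range (fun j => 1/((N:ℝ)-((j:ℕ)+1))) (N-1)]
  rw [harmonicNum, ← Finset.sum_range_reflect (fun j => (1:ℝ)/((j:ℕ)+1)) (N-1)]
  apply Finset.sum_congr rfl
  intro j hj
  rw [Finset.mem_range] at hj
  congr 1
  have h1 : N - 1 - 1 - j = N - 2 - j := by omega
  rw [h1]
  have h2 : ((N - 2 - j : ℕ) : ℝ) = (N:ℝ) - 2 - j := by
    push_cast [Nat.cast_sub (by omega : j ≤ N - 2), Nat.cast_sub (by omega : 2 ≤ N)]
    ring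
  rw [h2]; ring

lemma sum_inv_direct (N : ℕ) :
    ∑ j : Fin (N-1), 1 / (((j:ℕ):ℝ)+1) = harmonicNum N := by
  rw [Fin.sum_univ_eq_sum_range (fun j => 1/(((j:ℕ):ℝ)+1)) (N-1), harmonicNum]

/-- For every N ≥ 3, β > 0 and δ ∈ ℝ, if θ = −δ (so that x = 0) then
E_r(θ) = E_p(θ) = N²·θ·H_N; in particular this value does not depend on β. -/
theorem cost_at_neutral_incentive (N : ℕ) (hN : 3 ≤ N) (β δ θ : ℝ) (hβ : 0 < β)
    (hθ : θ = -δ) :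
    Ereward N β δ θ = (N : ℝ) ^ 2 * θ * harmonicNum N ∧
    Epunish N β δ θ = (N : ℝ) ^ 2 * θ * harmonicNum N := by
  subst hθ
  have hfund := fund_neutral N hN β δ
  have hrow0 : ∀ j : Fin (N-1),
      fund N β δ (-δ) ⟨0, by omega⟩ j = 2 * N / (((j:ℕ):ℝ)+1) := by
    intro j
    rw [hfund]
    show Gfun N (j:ℕ) (0+1) = _
    rw [Nat.zero_add, Gfun_one N (j:ℕ) hN (by omega)]
  have hrowN : ∀ j : Fin (N-1),
      fund N β δ (-δ) ⟨N-2, by omega⟩ j = 2 * N / ((N:ℝ) - (((j:ℕ):ℝ)+1)) := by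
    intro j
    rw [hfund]
    show Gfun N (j:ℕ) ((N-2)+1) = _
    have : (N-2)+1 = N-1 := by omega
    rw [this, Gfun_penult N (j:ℕ) hN (by omega)]
  have hj1 : ∀ j : Fin (N-1), (((j:ℕ):ℝ)+1) ≠ 0 := fun j => by positivity
  have hjN : ∀ j : Fin (N-1), (N:ℝ) - (((j:ℕ):ℝ)+1) ≠ 0 := by
    intro j
    have : ((j:ℕ):ℝ)+1 < N := by exact_mod_cast (by omega : (j:ℕ) + 1 < N)
    linarith
  constructor
  · rw [Ereward, dif_pos hN]
    have hterm : ∀ j : Fin (N-1),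
        (fund N β δ (-δ) ⟨0, by omega⟩ j + fund N β δ (-δ) ⟨N-2, by omega⟩ j)
          * (((j:ℕ):ℝ) + 1)
        = 2 * (N:ℝ)^2 * (1 / ((N:ℝ) - (((j:ℕ):ℝ)+1))) := by
      intro j
      rw [hrow0 j, hrowN j]
      set a := ((j:ℕ):ℝ)+1 with ha
      have h1 : a ≠ 0 := hj1 j
      have h2 : (N:ℝ) - a ≠ 0 := hjN j
      field_simp
      ring
    rw [Finset.sum_congr rfl (fun j _ => hterm j), ← Finset.mul_sum,
      sum_inv_reflect N hN]
    ring
  · rw [Epunish, dif_pos hN]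
    have hterm : ∀ j : Fin (N-1),
        (fund N β δ (-δ) ⟨0, by omega⟩ j + fund N β δ (-δ) ⟨N-2, by omega⟩ j)
          * ((N:ℝ) - (((j:ℕ):ℝ) + 1))
        = 2 * (N:ℝ)^2 * (1 / (((j:ℕ):ℝ)+1)) := by
      intro j
      rw [hrow0 j, hrowN j]
      set a := ((j:ℕ):ℝ)+1 with ha
      have h1 : a ≠ 0 := hj1 j
      have h2 : (N:ℝ) - a ≠ 0 := hjN j
      field_simp
      ring
    rw [Finset.sum_congr rfl (fun j _ => hterm j), ← Finset.mul_sum,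
      sum_inv_direct N]
    ring
end

section
/- For every integer N ≥ 2 and all reals β > 0, δ and θ, the ratio of the fixation probabilities satisfies ρ_{D,C} / ρ_{C,D} = e^{β(N−1)(δ + θ)}. -/
open Real Finset Filter Topology

/-- Fixation probability of a single cooperator in a population of defectors under the
pairwise comparison (Fermi) rule with constant payoff advantage `δ + θ` of cooperators:
`ρ_{D,C} = (1 + Σ_{i=1}^{N−1} Π_{k=1}^{i} (1 + e^{−x})/(1 + e^{x}))⁻¹` with `x = β(θ+δ)`. -/
noncomputable def rhoDC (N : ℕ) (β δ θ : ℝ) : ℝ :=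
  (1 + ∑ i ∈ Finset.range (N - 1), ∏ _k ∈ Finset.range (i + 1),
    (1 + Real.exp (-(β * (θ + δ)))) / (1 + Real.exp (β * (θ + δ))))⁻¹

/-- Fixation probability of a single defector in a population of cooperators:
`ρ_{C,D} = (1 + Σ_{i=1}^{N−1} Π_{k=1}^{i} (1 + e^{x})/(1 + e^{−x}))⁻¹` with `x = β(θ+δ)`. -/
noncomputable def rhoCD (N : ℕ) (β δ θ : ℝ) : ℝ :=
  (1 + ∑ i ∈ Finset.range (N - 1), ∏ _k ∈ Finset.range (i + 1),
    (1 + Real.exp (β * (θ + δ))) / (1 + Real.exp (-(β * (θ + δ)))))⁻¹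

/-- For every integer N ≥ 2 and all reals β > 0, δ and θ,
ρ_{D,C} / ρ_{C,D} = e^{β(N−1)(δ + θ)}. -/
theorem fixation_probability_ratio (N : ℕ) (hN : 2 ≤ N) (β δ θ : ℝ) (hβ : 0 < β) :
    rhoDC N β δ θ / rhoCD N β δ θ = Real.exp (β * ((N : ℝ) - 1) * (δ + θ)) := by
  set x : ℝ := β * (θ + δ) with hx
  have hpos : (0:ℝ) < 1 + Real.exp x := by positivity
  have hposn : (0:ℝ) < 1 + Real.exp (-x) := by positivity
  have key1 : (1 + Real.exp (-x)) / (1 + Real.exp x) = Real.exp (-x) := by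
    rw [div_eq_iff (ne_of_gt hpos)]
    rw [mul_add, mul_one, ← Real.exp_add]
    rw [neg_add_cancel, Real.exp_zero]
    ring
  have key2 : (1 + Real.exp x) / (1 + Real.exp (-x)) = Real.exp x := by
    rw [div_eq_iff (ne_of_gt hposn)]
    rw [mul_add, mul_one, ← Real.exp_add]
    rw [add_neg_cancel, Real.exp_zero]
    ring
  have hprod1 : ∀ i : ℕ, (∏ _k ∈ Finset.range (i + 1),
      (1 + Real.exp (-x)) / (1 + Real.exp x)) = Real.exp (-(x * (i+1))) := by
    intro i
    rw [Finset.prod_const, Finset.card_range, key1, ← Real.exp_nat_mul]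
    congr 1
    push_cast
    ring
  have hprod2 : ∀ i : ℕ, (∏ _k ∈ Finset.range (i + 1),
      (1 + Real.exp x) / (1 + Real.exp (-x))) = Real.exp (x * (i+1)) := by
    intro i
    rw [Finset.prod_const, Finset.card_range, key2, ← Real.exp_nat_mul]
    congr 1
    push_cast
    ring
  have hA : rhoDC N β δ θ = (∑ i ∈ Finset.range N, Real.exp (-(x * i)))⁻¹ := by
    unfold rhoDC
    rw [← hx]
    rw [Finset.sum_congr rfl (fun i _ => hprod1 i)]
    congr 1
    obtain ⟨M, rfl⟩ : ∃ M, N = M + 1 := ⟨N - 1, (Nat.succ_pred_eq_of_pos (by omega)).symm⟩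
    rw [Finset.sum_range_succ']
    push_cast
    simp [add_comm]
  have hB : rhoCD N β δ θ = (∑ i ∈ Finset.range N, Real.exp (x * i))⁻¹ := by
    unfold rhoCD
    rw [← hx]
    rw [Finset.sum_congr rfl (fun i _ => hprod2 i)]
    congr 1
    obtain ⟨M, rfl⟩ : ∃ M, N = M + 1 := ⟨N - 1, (Nat.succ_pred_eq_of_pos (by omega)).symm⟩
    rw [Finset.sum_range_succ']
    push_cast
    simp [add_comm]
  have hApos : (0:ℝ) < ∑ i ∈ Finset.range N, Real.exp (-(x * i)) := by
    apply Finset.sum_pos (fun i _ => Real.exp_pos _)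
    exact Finset.nonempty_range_iff.mpr (by omega)
  have hBpos : (0:ℝ) < ∑ i ∈ Finset.range N, Real.exp (x * i) := by
    apply Finset.sum_pos (fun i _ => Real.exp_pos _)
    exact Finset.nonempty_range_iff.mpr (by omega)
  have hrefl : (∑ i ∈ Finset.range N, Real.exp (x * i)) =
      Real.exp (x * ((N:ℝ) - 1)) * ∑ i ∈ Finset.range N, Real.exp (-(x * i)) := by
    rw [Finset.mul_sum]
    rw [← Finset.sum_range_reflect (fun i => Real.exp (x * i)) N]
    apply Finset.sum_congr rfl
    intro i hi
    rw [Finset.mem_range] at hi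
    rw [← Real.exp_add]
    congr 1
    have : ((N - 1 - i : ℕ) : ℝ) = (N : ℝ) - 1 - i := by
      have : i ≤ N - 1 := by omega
      push_cast [Nat.cast_sub (by omega : 1 ≤ N), Nat.cast_sub this]
      push_cast [Nat.cast_sub (by omega : 1 ≤ N)]
      ring
    rw [this]
    ring
  rw [hA, hB, hrefl, inv_div_inv, mul_div_assoc, div_self (ne_of_gt hApos), mul_one, hx]
  congr 1
  ring
end

section
/- For every integer N ≥ 2, all reals β > 0, δ, θ, and every ω ∈ (0,1), the long-run frequency of cooperation satisfies ρ_{D,C}/(ρ_{D,C} + ρ_{C,D}) ≥ ω if and only if θ ≥ θ_0(ω) := (1/((N−1)β))·log(ω/(1−ω)) − δ. -/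
open Real Finset Filter Topology

set_option maxHeartbeats 1000000 in
/-- For every integer N ≥ 2, all reals β > 0, δ, θ, and every ω ∈ (0,1), the
long-run frequency of cooperation satisfies ρ_{D,C}/(ρ_{D,C} + ρ_{C,D}) ≥ ω if and only if
θ ≥ θ_0(ω) = (1/((N−1)β))·log(ω/(1−ω)) − δ. -/
theorem cooperation_frequency_threshold (N : ℕ) (hN : 2 ≤ N) (β δ θ ω : ℝ) (hβ : 0 < β)
    (hω : ω ∈ Set.Ioo (0 : ℝ) 1) :
    ω ≤ rhoDC N β δ θ / (rhoDC N β δ θ + rhoCD N β δ θ) ↔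
      1 / (((N : ℝ) - 1) * β) * Real.log (ω / (1 - ω)) - δ ≤ θ := by
  obtain ⟨hω0, hω1⟩ := hω
  have hω1' : 0 < 1 - ω := by linarith
  set a := Real.exp (-(β * (θ + δ))) with ha
  set b := Real.exp (β * (θ + δ)) with hb
  have ha0 : 0 < a := Real.exp_pos _
  have hb0 : 0 < b := Real.exp_pos _
  have hab : a * b = 1 := by rw [ha, hb, ← Real.exp_add]; simp
  have hterm1 : (1 + a) / (1 + b) = a := by
    rw [div_eq_iff (by positivity)]; nlinarith [hab]
  have hterm2 : (1 + b) / (1 + a) = b := by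
    rw [div_eq_iff (by positivity)]; nlinarith [hab]
  have hsum : ∀ c : ℝ, 1 + ∑ i ∈ Finset.range (N - 1), c ^ (i + 1)
      = ∑ i ∈ Finset.range N, c ^ i := by
    intro c
    rw [show N = (N - 1) + 1 by omega, Finset.sum_range_succ']
    simp [add_comm]
  set A := ∑ i ∈ Finset.range N, a ^ i with hA
  set B := ∑ i ∈ Finset.range N, b ^ i with hB
  have hA0 : 0 < A :=
    Finset.sum_pos (fun i _ => pow_pos ha0 i) ⟨0, Finset.mem_range.2 (by omega)⟩
  have hB0 : 0 < B :=
    Finset.sum_pos (fun i _ => pow_pos hb0 i) ⟨0, Finset.mem_range.2 (by omega)⟩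
  have hDC : rhoDC N β δ θ = A⁻¹ := by
    rw [rhoDC, ← ha, ← hb]
    congr 1
    rw [hA, ← hsum a]
    congr 1
    refine Finset.sum_congr rfl fun i _ => ?_
    rw [Finset.prod_const, Finset.card_range, hterm1]
  have hCD : rhoCD N β δ θ = B⁻¹ := by
    rw [rhoCD, ← ha, ← hb]
    congr 1
    rw [hB, ← hsum b]
    congr 1
    refine Finset.sum_congr rfl fun i _ => ?_
    rw [Finset.prod_const, Finset.card_range, hterm2]
  have hAB : A = a ^ (N - 1) * B := by
    rw [hA, hB, ← Finset.sum_range_reflect, Finset.mul_sum]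
    refine Finset.sum_congr rfl fun i hi => ?_
    rw [Finset.mem_range] at hi
    have h2 : a ^ i * b ^ i = 1 := by rw [← mul_pow, hab, one_pow]
    have h1 : a ^ (N - 1 - i) * a ^ i = a ^ (N - 1) := by
      rw [← pow_add]; congr 1; omega
    calc a ^ (N - 1 - i) = a ^ (N - 1 - i) * (a ^ i * b ^ i) := by rw [h2, mul_one]
      _ = a ^ (N - 1 - i) * a ^ i * b ^ i := by ring
      _ = a ^ (N - 1) * b ^ i := by rw [h1]
  have hratio : rhoDC N β δ θ / (rhoDC N β δ θ + rhoCD N β δ θ)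
      = 1 / (a ^ (N - 1) + 1) := by
    rw [hDC, hCD, hAB]
    have hpk : (0:ℝ) < a ^ (N - 1) := pow_pos ha0 _
    field_simp
    ring
  rw [hratio]
  have hD : (0:ℝ) < a ^ (N - 1) + 1 := by positivity
  have hc : (0:ℝ) < ((N : ℝ) - 1) * β := by
    have h2 : (2:ℝ) ≤ (N : ℝ) := by exact_mod_cast hN
    nlinarith
  have hk : a ^ (N - 1) = Real.exp (((N : ℝ) - 1) * (-(β * (θ + δ)))) := by
    rw [ha, ← Real.exp_nat_mul]
    congr 1
    have : ((N - 1 : ℕ) : ℝ) = (N : ℝ) - 1 := by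
      push_cast [Nat.cast_sub (by omega : 1 ≤ N)]; ring
    rw [this]
  have hlog : Real.log ((1 - ω) / ω) = -Real.log (ω / (1 - ω)) := by
    rw [← Real.log_inv]
    congr 1
    field_simp
  have h1 : ω ≤ 1 / (a ^ (N - 1) + 1) ↔ a ^ (N - 1) ≤ (1 - ω) / ω := by
    rw [le_div_iff₀ hD, le_div_iff₀ hω0]
    constructor <;> intro h <;> nlinarith
  have h2 : a ^ (N - 1) ≤ (1 - ω) / ω ↔
      ((N : ℝ) - 1) * (-(β * (θ + δ))) ≤ Real.log ((1 - ω) / ω) := by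
    rw [hk, ← Real.le_log_iff_exp_le (by positivity)]
  rw [h1, h2, hlog, sub_le_iff_le_add, one_div, inv_mul_le_iff₀ hc]
  constructor <;> intro h <;> nlinarith
end

section
/- For all integers N, n, i with 2 ≤ n ≤ N and 0 ≤ i ≤ N−1, and all reals r, c, the average payoff of a defector in the Public Goods Game satisfies Π_D(i) = Σ_{j=0}^{n−1} [C(i,j)·C(N−1−i,n−1−j)/C(N−1,n−1)]·(j·rc/n) = rc(n−1)·i/(n(N−1)). -/
open Real Finset

/-- Average payoff of a cooperator in the Public Goods Game in a population of `N` players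
with `i` cooperators, where groups of size `n` are sampled without replacement:
`Π_C(i) = Σ_{j=0}^{n−1} [C(i−1,j)·C(N−i,n−1−j)/C(N−1,n−1)]·((j+1)·rc/n − c)`. -/
noncomputable def PiC (N n : ℕ) (r c : ℝ) (i : ℕ) : ℝ :=
  ∑ j ∈ Finset.range n,
    (((i - 1).choose j : ℝ) * ((N - i).choose (n - 1 - j) : ℝ) / ((N - 1).choose (n - 1) : ℝ))
      * (((j : ℝ) + 1) * r * c / (n : ℝ) - c)

/-- Average payoff of a defector in the Public Goods Game:
`Π_D(i) = Σ_{j=0}^{n−1} [C(i,j)·C(N−1−i,n−1−j)/C(N−1,n−1)]·(j·rc/n)`. -/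
noncomputable def PiD (N n : ℕ) (r c : ℝ) (i : ℕ) : ℝ :=
  ∑ j ∈ Finset.range n,
    ((i.choose j : ℝ) * ((N - 1 - i).choose (n - 1 - j) : ℝ) / ((N - 1).choose (n - 1) : ℝ))
      * ((j : ℝ) * r * c / (n : ℝ))


lemma vandermonde_range (m p k : ℕ) :
    ∑ j ∈ Finset.range (k+1), m.choose j * p.choose (k-j) = (m+p).choose k := by
  rw [Nat.add_choose_eq,
    Finset.Nat.sum_antidiagonal_eq_sum_range_succ (fun a b => m.choose a * p.choose b)]

lemma key_s13 (M k i : ℕ) (hi : i ≤ M) :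
    ∑ j ∈ Finset.range (k+1+1), j * (i.choose j * (M-i).choose (k+1-j))
      = i * (M-1).choose k := by
  rw [Finset.sum_range_succ']
  simp only [zero_mul, add_zero]
  cases i with
  | zero => simp
  | succ i' =>
    have hterm : ∀ j, (j+1) * ((i'+1).choose (j+1) * ((M-(i'+1)).choose (k+1-(j+1))))
        = (i'+1) * (i'.choose j * (M-(i'+1)).choose (k-j)) := by
      intro j
      have h := Nat.add_one_mul_choose_eq i' j
      have hk : k + 1 - (j+1) = k - j := by omega
      rw [hk]
      calc (j+1) * ((i'+1).choose (j+1) * ((M-(i'+1)).choose (k-j)))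
          = ((i'+1).choose (j+1) * (j+1)) * (M-(i'+1)).choose (k-j) := by ring
        _ = (i'+1) * i'.choose j * (M-(i'+1)).choose (k-j) := by rw [← h]
        _ = (i'+1) * (i'.choose j * (M-(i'+1)).choose (k-j)) := by ring
    calc ∑ j ∈ Finset.range (k+1), (j+1) * ((i'+1).choose (j+1) * ((M-(i'+1)).choose (k+1-(j+1))))
        = ∑ j ∈ Finset.range (k+1), (i'+1) * (i'.choose j * (M-(i'+1)).choose (k-j)) :=
          Finset.sum_congr rfl (fun j _ => hterm j)
      _ = (i'+1) * ∑ j ∈ Finset.range (k+1), i'.choose j * (M-(i'+1)).choose (k-j) := by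
          rw [Finset.mul_sum]
      _ = (i'+1) * (i' + (M-(i'+1))).choose k := by rw [vandermonde_range]
      _ = (i'+1) * (M-1).choose k := by congr 2; omega

/-- For 2 ≤ n ≤ N, 0 ≤ i ≤ N−1 and all reals r, c, the average payoff of a
defector in the PGG equals rc(n−1)·i/(n(N−1)). -/
theorem PGG_defector_payoff (N n i : ℕ) (hn : 2 ≤ n) (hnN : n ≤ N)
    (hiN : i ≤ N - 1) (r c : ℝ) :
    PiD N n r c i = r * c * ((n : ℝ) - 1) * (i : ℝ) / ((n : ℝ) * ((N : ℝ) - 1)) := by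
  obtain ⟨k, rfl⟩ : ∃ k, n = k + 1 + 1 := ⟨n - 2, by omega⟩
  obtain ⟨M, rfl⟩ : ∃ M, N = M + 1 := ⟨N - 1, by omega⟩
  have hMk : k + 1 ≤ M := by omega
  have hiM : i ≤ M := by simpa using hiN
  have hkey := key_s13 M k i hiM
  have hratio : M * (M-1).choose k = M.choose (k+1) * (k+1) := by
    obtain ⟨M', rfl⟩ : ∃ M', M = M' + 1 := ⟨M - 1, by omega⟩
    simpa using Nat.add_one_mul_choose_eq M' k
  have hC : (0:ℝ) < (M.choose (k+1) : ℝ) := by exact_mod_cast Nat.choose_pos hMk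
  have hMpos : (0:ℝ) < (M:ℝ) := by
    have : 0 < M := by omega
    exact_mod_cast this
  have hnpos : (0:ℝ) < ((k:ℝ) + 1 + 1) := by positivity
  have hPiD : PiD (M+1) (k+1+1) r c i
      = (↑(∑ j ∈ Finset.range (k+1+1), j * (i.choose j * (M-i).choose (k+1-j))) : ℝ)
        * (r * c / (((k:ℝ)+1+1) * (M.choose (k+1) : ℝ))) := by
    rw [PiD]
    push_cast
    rw [Finset.sum_mul]
    refine Finset.sum_congr rfl (fun j _ => ?_)
    field_simp
  rw [hPiD, hkey]
  have hcast : ((M - 1 : ℕ).choose k : ℝ) * (M:ℝ) = (M.choose (k+1) : ℝ) * ((k:ℝ)+1) := by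
    exact_mod_cast congrArg (Nat.cast : ℕ → ℝ)
      (by linarith [hratio] : (M-1).choose k * M = M.choose (k+1) * (k+1))
  push_cast
  have hN1 : ((M:ℝ) + 1) - 1 = (M:ℝ) := by ring
  rw [hN1]
  field_simp
  linear_combination ((i:ℝ) * r * c) * hcast
end
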